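/- arXiv:2205.03626 — 8 statements merged into one kernel-verified Lean document; each statement's English description precedes it below -/
import Mathlib

section
/- Let β ∈ (0,1) and let S ⊆ ℤ² be β-separated-covering. Then there exist r₀ > 0 and α₀ > 0 such that for every r > r₀ and every x ∈ ℝ², the set S ∩ B(x,r) is finite and card(S ∩ B(x,r)) ≤ α₀ · r^{2−2β}. -/
/-- The canonical embedding of `ℤ²` into the Euclidean plane. -/
noncomputable def embed2 (s : ℤ × ℤ) : EuclideanSpace ℝ (Fin 2) :=
  (WithLp.equiv 2 (Fin 2 → ℝ)).symm ![(s.1 : ℝ), (s.2 : ℝ)]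

/-- A set `S ⊆ ℤ²` is `β`-separated-covering if it contains `(0,0)`, every point of `S`
has even coordinate sum, distinct points `s, s'` of `S` satisfy
`|s - s'| ≥ |s|^β + |s'|^β`, and every `x ∈ ℝ²` admits `s ∈ S` with
`|x - s| ≤ |s|^β + (|x|+1)^β + 1`. -/
def SepCov (β : ℝ) (S : Set (ℤ × ℤ)) : Prop :=
  ((0, 0) : ℤ × ℤ) ∈ S ∧
  (∀ s ∈ S, Even (s.1 + s.2)) ∧
  (∀ s ∈ S, ∀ s' ∈ S, s ≠ s' →
    ‖embed2 s - embed2 s'‖ ≥ ‖embed2 s‖ ^ β + ‖embed2 s'‖ ^ β) ∧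
  (∀ x : EuclideanSpace ℝ (Fin 2), ∃ s ∈ S,
    ‖x - embed2 s‖ ≤ ‖embed2 s‖ ^ β + (‖x‖ + 1) ^ β + 1)

lemma norm_eq2 (v : EuclideanSpace ℝ (Fin 2)) : ‖v‖ = Real.sqrt ((v 0)^2 + (v 1)^2) := by
  rw [EuclideanSpace.norm_eq]; simp [Fin.sum_univ_two, sq_abs]

lemma abs_comp_le (v : EuclideanSpace ℝ (Fin 2)) (i : Fin 2) : |v i| ≤ ‖v‖ := by
  rw [norm_eq2]
  have h : (v i)^2 ≤ (v 0)^2 + (v 1)^2 := by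
    have : i = 0 ∨ i = 1 := by fin_cases i <;> simp
    rcases this with rfl | rfl <;> nlinarith [sq_nonneg (v 0), sq_nonneg (v 1)]
  have := Real.sqrt_le_sqrt h
  rwa [Real.sqrt_sq_eq_abs] at this

lemma floor_div_eq_abs_lt {a b c : ℝ} (hc : 0 < c) (h : ⌊a / c⌋ = ⌊b / c⌋) :
    |a - b| < c := by
  have h1 := Int.floor_le (a / c)
  have h2 := Int.lt_floor_add_one (a / c)
  have h3 := Int.floor_le (b / c)
  have h4 := Int.lt_floor_add_one (b / c)
  rw [h] at h1 h2
  have k1 : (a - b) / c < 1 := by rw [sub_div]; linarith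
  have k2 : (b - a) / c < 1 := by rw [sub_div]; linarith
  rw [div_lt_one hc] at k1 k2
  rw [abs_lt]; constructor <;> linarith

lemma one_le_norm_embed2 {s : ℤ × ℤ} (h : s ≠ (0, 0)) : 1 ≤ ‖embed2 s‖ := by
  have h0 : embed2 s 0 = (s.1 : ℝ) := rfl
  have h1 : embed2 s 1 = (s.2 : ℝ) := rfl
  rw [norm_eq2, h0, h1, Real.one_le_sqrt]
  have : s.1 ≠ 0 ∨ s.2 ≠ 0 := by
    by_contra hcon
    push_neg at hcon
    exact h (Prod.ext hcon.1 hcon.2)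
  rcases this with hs | hs
  · have : (1 : ℤ) ≤ s.1 ^ 2 := by nlinarith [Int.one_le_abs hs, abs_nonneg s.1, sq_abs s.1]
    have : (1 : ℝ) ≤ (s.1 : ℝ) ^ 2 := by exact_mod_cast this
    nlinarith [sq_nonneg ((s.2 : ℝ))]
  · have : (1 : ℤ) ≤ s.2 ^ 2 := by nlinarith [Int.one_le_abs hs, abs_nonneg s.2, sq_abs s.2]
    have : (1 : ℝ) ≤ (s.2 : ℝ) ^ 2 := by exact_mod_cast this
    nlinarith [sq_nonneg ((s.1 : ℝ))]

/-- Key counting lemma: a `2c`-separated set of lattice points inside a ball of radius `R`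
about `x` is finite, of cardinality at most `(2R/c + 2)^2`. -/
lemma grid_count (F : Set (ℤ × ℤ)) (c R : ℝ) (hc : 0 < c) (hR : 0 ≤ R)
    (x : EuclideanSpace ℝ (Fin 2))
    (hin : ∀ s ∈ F, ‖embed2 s - x‖ ≤ R)
    (hsep : ∀ s ∈ F, ∀ s' ∈ F, s ≠ s' → 2 * c ≤ ‖embed2 s - embed2 s'‖) :
    F.Finite ∧ (F.ncard : ℝ) ≤ (2 * R / c + 2) ^ 2 := by
  set φ : ℤ × ℤ → ℤ × ℤ := fun s => (⌊(s.1 : ℝ) / c⌋, ⌊(s.2 : ℝ) / c⌋) with hφ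
  have hinj : Set.InjOn φ F := by
    intro s hs s' hs' he
    by_contra hne
    have he1 : ⌊(s.1 : ℝ) / c⌋ = ⌊(s'.1 : ℝ) / c⌋ := congrArg Prod.fst he
    have he2 : ⌊(s.2 : ℝ) / c⌋ = ⌊(s'.2 : ℝ) / c⌋ := congrArg Prod.snd he
    have d1 : |(s.1 : ℝ) - (s'.1 : ℝ)| < c := floor_div_eq_abs_lt hc he1
    have d2 : |(s.2 : ℝ) - (s'.2 : ℝ)| < c := floor_div_eq_abs_lt hc he2
    have hlt : ‖embed2 s - embed2 s'‖ < 2 * c := by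
      have e0 : (embed2 s - embed2 s') 0 = (s.1 : ℝ) - (s'.1 : ℝ) := rfl
      have e1 : (embed2 s - embed2 s') 1 = (s.2 : ℝ) - (s'.2 : ℝ) := rfl
      rw [norm_eq2, e0, e1, Real.sqrt_lt' (by linarith)]
      have q1 : ((s.1 : ℝ) - (s'.1 : ℝ)) ^ 2 < c ^ 2 := by
        rw [← sq_abs]; exact pow_lt_pow_left₀ d1 (abs_nonneg _) two_ne_zero
      have q2 : ((s.2 : ℝ) - (s'.2 : ℝ)) ^ 2 < c ^ 2 := by
        rw [← sq_abs]; exact pow_lt_pow_left₀ d2 (abs_nonneg _) two_ne_zero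
      nlinarith
    exact absurd (hsep s hs s' hs' hne) (by linarith)
  set m₁ : ℤ := ⌊(x 0 - R) / c⌋ with hm₁
  set n₁ : ℤ := ⌊(x 0 + R) / c⌋ with hn₁
  set m₂ : ℤ := ⌊(x 1 - R) / c⌋ with hm₂
  set n₂ : ℤ := ⌊(x 1 + R) / c⌋ with hn₂
  have himg : φ '' F ⊆ ↑(Finset.Icc m₁ n₁ ×ˢ Finset.Icc m₂ n₂) := by
    rintro _ ⟨s, hs, rfl⟩
    have hb0 : |(s.1 : ℝ) - x 0| ≤ R := by
      have := abs_comp_le (embed2 s - x) 0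
      have e0 : (embed2 s - x) 0 = (s.1 : ℝ) - x 0 := rfl
      rw [e0] at this
      exact this.trans (hin s hs)
    have hb1 : |(s.2 : ℝ) - x 1| ≤ R := by
      have := abs_comp_le (embed2 s - x) 1
      have e1 : (embed2 s - x) 1 = (s.2 : ℝ) - x 1 := rfl
      rw [e1] at this
      exact this.trans (hin s hs)
    rw [abs_le] at hb0 hb1
    simp only [Finset.coe_product, Set.mem_prod, Finset.mem_coe, Finset.mem_Icc]
    have hdiv : ∀ a b : ℝ, a ≤ b → a / c ≤ b / c := fun a b h => (div_le_div_iff_of_pos_right hc).mpr h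
    refine ⟨⟨?_, ?_⟩, ?_, ?_⟩ <;> exact Int.floor_le_floor (hdiv _ _ (by linarith))
  have hfin : F.Finite := by
    have himgfin : (φ '' F).Finite :=
      (Finset.Icc m₁ n₁ ×ˢ Finset.Icc m₂ n₂).finite_toSet.subset himg
    exact Set.Finite.of_finite_image himgfin hinj
  refine ⟨hfin, ?_⟩
  have hcard1 : F.ncard = (φ '' F).ncard := (Set.ncard_image_of_injOn hinj).symm
  have hcard2 : (φ '' F).ncard ≤ (Finset.Icc m₁ n₁ ×ˢ Finset.Icc m₂ n₂).card := by
    have := Set.ncard_le_ncard himg (Finset.Icc m₁ n₁ ×ˢ Finset.Icc m₂ n₂).finite_toSet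
    rwa [Set.ncard_coe_finset] at this
  have hprod : (Finset.Icc m₁ n₁ ×ˢ Finset.Icc m₂ n₂).card
      = (n₁ + 1 - m₁).toNat * (n₂ + 1 - m₂).toNat := by
    rw [Finset.card_product, Int.card_Icc, Int.card_Icc]
  have key : ∀ y : ℝ, (((⌊(y + R) / c⌋ + 1 - ⌊(y - R) / c⌋).toNat : ℕ) : ℝ) ≤ 2 * R / c + 2 := by
    intro y
    have hmn : ⌊(y - R) / c⌋ ≤ ⌊(y + R) / c⌋ :=
      Int.floor_le_floor ((div_le_div_iff_of_pos_right hc).mpr (by linarith))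
    have hnn : (0 : ℤ) ≤ ⌊(y + R) / c⌋ + 1 - ⌊(y - R) / c⌋ := by omega
    rw [show (((⌊(y + R) / c⌋ + 1 - ⌊(y - R) / c⌋).toNat : ℕ) : ℝ)
        = ((⌊(y + R) / c⌋ + 1 - ⌊(y - R) / c⌋ : ℤ) : ℝ) by
      exact_mod_cast congrArg (fun z : ℤ => (z : ℝ)) (Int.toNat_of_nonneg hnn)]
    push_cast
    have h1 : ((⌊(y + R) / c⌋ : ℤ) : ℝ) ≤ (y + R) / c := Int.floor_le _
    have h2 : (y - R) / c - 1 < ((⌊(y - R) / c⌋ : ℤ) : ℝ) := Int.sub_one_lt_floor _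
    have h3 : (y + R) / c - (y - R) / c = 2 * R / c := by
      rw [div_sub_div_same]; ring_nf
    linarith
  have hM : (0 : ℝ) ≤ 2 * R / c + 2 := by positivity
  calc (F.ncard : ℝ) ≤ ((n₁ + 1 - m₁).toNat * (n₂ + 1 - m₂).toNat : ℕ) := by
        exact_mod_cast hcard1 ▸ hprod ▸ hcard2
    _ = (((n₁ + 1 - m₁).toNat : ℕ) : ℝ) * (((n₂ + 1 - m₂).toNat : ℕ) : ℝ) := by push_cast; ring
    _ ≤ (2 * R / c + 2) * (2 * R / c + 2) := by
        exact mul_le_mul (key (x 0)) (key (x 1)) (by positivity) hM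
    _ = (2 * R / c + 2) ^ 2 := by ring

lemma ncard_biUnion_le' {X : Type*} (n : ℕ) (A : ℕ → Set X) (h : ∀ k, (A k).Finite) :
    (⋃ k ∈ Finset.range n, A k).ncard ≤ ∑ k ∈ Finset.range n, (A k).ncard := by
  induction n with
  | zero => simp
  | succ n ih =>
    rw [Finset.sum_range_succ]
    have he : (⋃ k ∈ Finset.range (n + 1), A k) = (⋃ k ∈ Finset.range n, A k) ∪ A n := by
      rw [Finset.range_add_one, Finset.set_biUnion_insert, Set.union_comm]
    rw [he]
    have hfin : (⋃ k ∈ Finset.range n, A k).Finite :=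
      Set.Finite.biUnion (Finset.range n).finite_toSet (fun k _ => h k)
    exact le_trans (Set.ncard_union_le _ _) (Nat.add_le_add ih le_rfl)

/-- For a `β`-separated-covering set `S`, there are `r₀, α₀ > 0` such that for every
`r > r₀` and every `x ∈ ℝ²` the set `S ∩ B(x,r)` is finite with at most
`α₀ · r^(2-2β)` elements. -/
theorem card_inter_ball_le (β : ℝ) (hβ0 : 0 < β) (hβ1 : β < 1)
    (S : Set (ℤ × ℤ)) (hS : SepCov β S) :
    ∃ r₀ > (0 : ℝ), ∃ α₀ > (0 : ℝ), ∀ r > r₀, ∀ x : EuclideanSpace ℝ (Fin 2),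
      {s ∈ S | embed2 s ∈ Metric.ball x r}.Finite ∧
      ({s ∈ S | embed2 s ∈ Metric.ball x r}.ncard : ℝ) ≤ α₀ * r ^ (2 - 2 * β) := by
  obtain ⟨-, -, hsep, -⟩ := hS
  set q : ℝ := (2 : ℝ) ^ (2 - 2 * β) with hqdef
  have hq : 1 < q :=
    (Real.one_lt_rpow_iff_of_pos two_pos).mpr (Or.inl ⟨one_lt_two, by linarith⟩)
  have hq0 : 0 < q - 1 := by linarith
  refine ⟨1, one_pos, 16 + 1296 / (q - 1),
    by have := div_pos (by norm_num : (0:ℝ) < 1296) hq0; linarith, ?_⟩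
  intro r hr x
  have hr0 : (0 : ℝ) < r := lt_trans one_pos hr
  set T := {s ∈ S | embed2 s ∈ Metric.ball x r} with hTdef
  have hmem : ∀ s ∈ T, ‖embed2 s - x‖ < r := by
    intro s hs
    have := hs.2
    rwa [Metric.mem_ball, dist_eq_norm] at this
  have hr2 : (1 : ℝ) ≤ r ^ (2 - 2 * β) := by
    have := Real.rpow_le_rpow_of_exponent_le hr.le (by linarith : (0:ℝ) ≤ 2 - 2 * β)
    rwa [Real.rpow_zero] at this
  by_cases hx2 : 2 * r < ‖x‖
  · -- far case : every point of T has norm at least r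
    have hnorm : ∀ s ∈ T, r ≤ ‖embed2 s‖ := by
      intro s hs
      have h1 := hmem s hs
      have h2 : ‖x‖ - ‖embed2 s‖ ≤ ‖x - embed2 s‖ := norm_sub_norm_le _ _
      rw [norm_sub_rev] at h2
      linarith
    have hsep' : ∀ s ∈ T, ∀ s' ∈ T, s ≠ s' → 2 * r ^ β ≤ ‖embed2 s - embed2 s'‖ := by
      intro s hs s' hs' hne
      have h := hsep s hs.1 s' hs'.1 hne
      have b1 : r ^ β ≤ ‖embed2 s‖ ^ β := Real.rpow_le_rpow hr0.le (hnorm s hs) hβ0.le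
      have b2 : r ^ β ≤ ‖embed2 s'‖ ^ β := Real.rpow_le_rpow hr0.le (hnorm s' hs') hβ0.le
      linarith
    obtain ⟨hfin, hcard⟩ := grid_count T (r ^ β) r (Real.rpow_pos_of_pos hr0 β) hr0.le x
      (fun s hs => (hmem s hs).le) hsep'
    refine ⟨hfin, le_trans hcard ?_⟩
    have hu1 : (1 : ℝ) ≤ r ^ (1 - β) := by
      have := Real.rpow_le_rpow_of_exponent_le hr.le (by linarith : (0:ℝ) ≤ 1 - β)
      rwa [Real.rpow_zero] at this
    have e1 : 2 * r / r ^ β = 2 * r ^ (1 - β) := by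
      rw [Real.rpow_sub hr0, Real.rpow_one, mul_div_assoc]
    have e2 : r ^ (1 - β) * r ^ (1 - β) = r ^ (2 - 2 * β) := by
      rw [← Real.rpow_add hr0]; ring_nf
    have hb : 2 * r / r ^ β + 2 ≤ 4 * r ^ (1 - β) := by rw [e1]; linarith
    calc (2 * r / r ^ β + 2) ^ 2 ≤ (4 * r ^ (1 - β)) ^ 2 :=
          pow_le_pow_left₀ (by positivity) hb 2
      _ = 16 * (r ^ (1 - β) * r ^ (1 - β)) := by ring
      _ = 16 * r ^ (2 - 2 * β) := by rw [e2]
      _ ≤ (16 + 1296 / (q - 1)) * r ^ (2 - 2 * β) := by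
          have h1 : 0 < 1296 / (q - 1) := div_pos (by norm_num) hq0
          nlinarith
  · -- near case : dyadic decomposition
    push_neg at hx2
    have h3r : ∀ s ∈ T, ‖embed2 s‖ ≤ 3 * r := by
      intro s hs
      have h1 := hmem s hs
      have h2 : ‖embed2 s‖ - ‖x‖ ≤ ‖embed2 s - x‖ := norm_sub_norm_le _ _
      linarith
    set l : ℝ := Real.logb 2 (3 * r) with hldef
    have h3r1 : (1 : ℝ) < 3 * r := by linarith
    have hl0 : 0 ≤ l := Real.logb_nonneg one_lt_two h3r1.le
    set K : ℕ := (⌊l⌋).toNat with hKdef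
    have hKcast : ((K : ℕ) : ℝ) = ((⌊l⌋ : ℤ) : ℝ) := by
      rw [hKdef]; exact_mod_cast congrArg (fun z : ℤ => (z : ℝ))
        (Int.toNat_of_nonneg (Int.floor_nonneg.mpr hl0))
    have hKle : (K : ℝ) ≤ l := by rw [hKcast]; exact Int.floor_le l
    have hKgt : l < (K : ℝ) + 1 := by rw [hKcast]; exact Int.lt_floor_add_one l
    have h2l : (2 : ℝ) ^ l = 3 * r := Real.rpow_logb two_pos (by norm_num) (by linarith)
    have h2K : (2 : ℝ) ^ (K : ℕ) ≤ 3 * r := by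
      rw [← Real.rpow_natCast]
      calc (2 : ℝ) ^ ((K : ℕ) : ℝ) ≤ 2 ^ l :=
            Real.rpow_le_rpow_of_exponent_le one_le_two hKle
        _ = 3 * r := h2l
    have h2K1 : 3 * r ≤ (2 : ℝ) ^ (K + 1 : ℕ) := by
      rw [← Real.rpow_natCast]
      push_cast
      calc 3 * r = 2 ^ l := h2l.symm
        _ ≤ 2 ^ ((K : ℝ) + 1) := Real.rpow_le_rpow_of_exponent_le one_le_two hKgt.le
    set A : ℕ → Set (ℤ × ℤ) := fun k =>
      {s ∈ T | (2 : ℝ) ^ k ≤ ‖embed2 s‖ ∧ ‖embed2 s‖ < 2 ^ (k + 1)} with hAdef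
    have hA : ∀ k : ℕ, (A k).Finite ∧ ((A k).ncard : ℝ) ≤ 36 * q ^ k := by
      intro k
      have h2k0 : (0 : ℝ) < (2 : ℝ) ^ (k : ℕ) := by positivity
      set c : ℝ := ((2 : ℝ) ^ (k : ℕ)) ^ β with hcdef
      have hc : 0 < c := Real.rpow_pos_of_pos h2k0 β
      have hin : ∀ s ∈ A k, ‖embed2 s - 0‖ ≤ (2 : ℝ) ^ (k + 1 : ℕ) := by
        intro s hs
        rw [sub_zero]
        exact hs.2.2.le
      have hsep' : ∀ s ∈ A k, ∀ s' ∈ A k, s ≠ s' → 2 * c ≤ ‖embed2 s - embed2 s'‖ := by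
        intro s hs s' hs' hne
        have h := hsep s hs.1.1 s' hs'.1.1 hne
        have b1 : c ≤ ‖embed2 s‖ ^ β := Real.rpow_le_rpow h2k0.le hs.2.1 hβ0.le
        have b2 : c ≤ ‖embed2 s'‖ ^ β := Real.rpow_le_rpow h2k0.le hs'.2.1 hβ0.le
        linarith
      obtain ⟨hfin, hcard⟩ := grid_count (A k) c ((2 : ℝ) ^ (k + 1 : ℕ)) hc
        (by positivity) 0 hin hsep'
      refine ⟨hfin, le_trans hcard ?_⟩
      set u : ℝ := ((2 : ℝ) ^ (k : ℕ)) ^ (1 - β) with hudef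
      have hu1 : (1 : ℝ) ≤ u := by
        have h21 : (1 : ℝ) ≤ (2 : ℝ) ^ (k : ℕ) := one_le_pow₀ one_le_two
        have := Real.rpow_le_rpow_of_exponent_le h21 (by linarith : (0:ℝ) ≤ 1 - β)
        rwa [Real.rpow_zero] at this
      have e1 : 2 * (2 : ℝ) ^ (k + 1 : ℕ) / c = 4 * u := by
        have hp : (2 : ℝ) ^ (k + 1 : ℕ) = 2 * 2 ^ (k : ℕ) := by
          rw [pow_succ]; ring
        have hd : ((2 : ℝ) ^ (k : ℕ)) / c = u := by
          rw [hcdef, hudef, Real.rpow_sub h2k0, Real.rpow_one]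
        rw [hp]
        rw [show 2 * (2 * (2:ℝ) ^ (k:ℕ)) / c = 4 * ((2:ℝ) ^ (k:ℕ) / c) by ring]
        rw [hd]
      have e2 : u * u = q ^ k := by
        rw [hudef, ← Real.rpow_add h2k0]
        rw [show (1 - β) + (1 - β) = 2 - 2 * β by ring]
        rw [hqdef, ← Real.rpow_natCast (2:ℝ) k, ← Real.rpow_mul (by norm_num : (0:ℝ) ≤ 2),
          ← Real.rpow_natCast ((2:ℝ) ^ (2 - 2*β)) k, ← Real.rpow_mul (by norm_num : (0:ℝ) ≤ 2)]
        ring_nf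
      have hb : 2 * (2 : ℝ) ^ (k + 1 : ℕ) / c + 2 ≤ 6 * u := by
        rw [e1]; linarith
      calc (2 * (2 : ℝ) ^ (k + 1 : ℕ) / c + 2) ^ 2 ≤ (6 * u) ^ 2 :=
            pow_le_pow_left₀ (by positivity) hb 2
        _ = 36 * (u * u) := by ring
        _ = 36 * q ^ k := by rw [e2]
    have hcover : T ⊆ {((0, 0) : ℤ × ℤ)} ∪ ⋃ k ∈ Finset.range (K + 1), A k := by
      intro s hs
      by_cases h1 : ‖embed2 s‖ < 1
      · left
        simp only [Set.mem_singleton_iff]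
        by_contra hne
        exact absurd h1 (not_lt.mpr (one_le_norm_embed2 hne))
      · right
        push_neg at h1
        have hpos : 0 < ‖embed2 s‖ := lt_of_lt_of_le one_pos h1
        set l' : ℝ := Real.logb 2 ‖embed2 s‖ with hl'def
        have hl'0 : 0 ≤ l' := Real.logb_nonneg one_lt_two h1
        set k : ℕ := (⌊l'⌋).toNat with hkdef
        have hkcast : ((k : ℕ) : ℝ) = ((⌊l'⌋ : ℤ) : ℝ) := by
          rw [hkdef]; exact_mod_cast congrArg (fun z : ℤ => (z : ℝ))
            (Int.toNat_of_nonneg (Int.floor_nonneg.mpr hl'0))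
        have hk1 : (k : ℝ) ≤ l' := by rw [hkcast]; exact Int.floor_le l'
        have hk2 : l' < (k : ℝ) + 1 := by rw [hkcast]; exact Int.lt_floor_add_one l'
        have h2l' : (2 : ℝ) ^ l' = ‖embed2 s‖ := Real.rpow_logb two_pos (by norm_num) hpos
        have hkK : k ≤ K := by
          have hll : l' ≤ l := by
            rw [hl'def, hldef]
            exact (Real.logb_le_logb one_lt_two hpos (by linarith : (0:ℝ) < 3 * r)).mpr (h3r s hs)
          exact Int.toNat_le_toNat (Int.floor_le_floor hll)
        refine Set.mem_biUnion (Finset.mem_range.mpr (Nat.lt_succ_of_le hkK)) ⟨hs, ?_, ?_⟩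
        · rw [← Real.rpow_natCast]
          calc (2 : ℝ) ^ ((k : ℕ) : ℝ) ≤ 2 ^ l' :=
                Real.rpow_le_rpow_of_exponent_le one_le_two hk1
            _ = ‖embed2 s‖ := h2l'
        · rw [← Real.rpow_natCast]
          push_cast
          calc ‖embed2 s‖ = 2 ^ l' := h2l'.symm
            _ < 2 ^ ((k : ℝ) + 1) := Real.rpow_lt_rpow_of_exponent_lt one_lt_two hk2
    have hUfin : (⋃ k ∈ Finset.range (K + 1), A k).Finite :=
      Set.Finite.biUnion (Finset.range (K + 1)).finite_toSet (fun k _ => (hA k).1)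
    have hTfin : T.Finite :=
      Set.Finite.subset ((Set.finite_singleton _).union hUfin) hcover
    refine ⟨hTfin, ?_⟩
    have hnat : T.ncard ≤ 1 + ∑ k ∈ Finset.range (K + 1), (A k).ncard := by
      calc T.ncard ≤ ({((0, 0) : ℤ × ℤ)} ∪ ⋃ k ∈ Finset.range (K + 1), A k).ncard :=
            Set.ncard_le_ncard hcover ((Set.finite_singleton _).union hUfin)
        _ ≤ ({((0, 0) : ℤ × ℤ)} : Set (ℤ × ℤ)).ncard
              + (⋃ k ∈ Finset.range (K + 1), A k).ncard :=
            Set.ncard_union_le _ _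
        _ ≤ 1 + ∑ k ∈ Finset.range (K + 1), (A k).ncard := by
            rw [Set.ncard_singleton]
            exact Nat.add_le_add le_rfl (ncard_biUnion_le' (K + 1) A (fun k => (hA k).1))
    have hsum : ∑ k ∈ Finset.range (K + 1), ((A k).ncard : ℝ)
        ≤ 36 * ((q ^ (K + 1) - 1) / (q - 1)) := by
      calc ∑ k ∈ Finset.range (K + 1), ((A k).ncard : ℝ)
          ≤ ∑ k ∈ Finset.range (K + 1), 36 * q ^ k :=
            Finset.sum_le_sum (fun k _ => (hA k).2)
        _ = 36 * ∑ k ∈ Finset.range (K + 1), q ^ k := by rw [Finset.mul_sum]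
        _ = 36 * ((q ^ (K + 1) - 1) / (q - 1)) := by rw [geom_sum_eq (ne_of_gt hq)]
    have hq4 : q ≤ 4 := by
      rw [hqdef]
      calc (2 : ℝ) ^ (2 - 2 * β) ≤ 2 ^ ((2 : ℕ) : ℝ) := by
            apply Real.rpow_le_rpow_of_exponent_le one_le_two
            push_cast; linarith
        _ = 4 := by rw [Real.rpow_natCast]; norm_num
    have hqK : q ^ K ≤ 9 * r ^ (2 - 2 * β) := by
      have e3 : q ^ K = ((2 : ℝ) ^ (K : ℕ)) ^ (2 - 2 * β) := by
        rw [hqdef, ← Real.rpow_natCast (2:ℝ) K, ← Real.rpow_mul (by norm_num : (0:ℝ) ≤ 2),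
          ← Real.rpow_natCast ((2:ℝ) ^ (2 - 2*β)) K, ← Real.rpow_mul (by norm_num : (0:ℝ) ≤ 2)]
        ring_nf
      rw [e3]
      calc ((2 : ℝ) ^ (K : ℕ)) ^ (2 - 2 * β) ≤ (3 * r) ^ (2 - 2 * β) :=
            Real.rpow_le_rpow (by positivity) h2K (by linarith)
        _ = 3 ^ (2 - 2 * β) * r ^ (2 - 2 * β) :=
            Real.mul_rpow (by norm_num) hr0.le
        _ ≤ 9 * r ^ (2 - 2 * β) := by
            have h9 : (3 : ℝ) ^ (2 - 2 * β) ≤ 9 := by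
              calc (3 : ℝ) ^ (2 - 2 * β) ≤ 3 ^ ((2 : ℕ) : ℝ) := by
                    apply Real.rpow_le_rpow_of_exponent_le (by norm_num)
                    push_cast; linarith
                _ = 9 := by rw [Real.rpow_natCast]; norm_num
            have hrp : (0 : ℝ) ≤ r ^ (2 - 2 * β) := by positivity
            nlinarith
    have hqpos : (0 : ℝ) < q := by linarith
    have hgeom : (q ^ (K + 1) - 1) / (q - 1) ≤ 36 * r ^ (2 - 2 * β) / (q - 1) := by
      have hnum : q ^ (K + 1) - 1 ≤ 36 * r ^ (2 - 2 * β) := by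
        have hmul : q ^ K * q ≤ (9 * r ^ (2 - 2 * β)) * 4 :=
          mul_le_mul hqK hq4 hqpos.le (by positivity)
        rw [pow_succ]
        linarith
      exact (div_le_div_iff_of_pos_right hq0).mpr hnum
    have hfinal : (T.ncard : ℝ) ≤ (16 + 1296 / (q - 1)) * r ^ (2 - 2 * β) := by
      have hc1 : (T.ncard : ℝ) ≤ 1 + ∑ k ∈ Finset.range (K + 1), ((A k).ncard : ℝ) := by
        exact_mod_cast hnat
      have e : 36 * (36 * r ^ (2 - 2 * β) / (q - 1)) = 1296 / (q - 1) * r ^ (2 - 2 * β) := by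
        field_simp; ring
      have t1 : (T.ncard : ℝ) ≤ 1 + 36 * (36 * r ^ (2 - 2 * β) / (q - 1)) := by
        linarith [hc1, hsum, hgeom]
      rw [e] at t1
      rw [add_mul]
      have h16 : (1 : ℝ) ≤ 16 * r ^ (2 - 2 * β) := by linarith
      linarith
    exact hfinal
end

section
/- Let β ∈ (0,1) and let S ⊆ ℤ² be β-separated-covering. Then there exists r₀ > 0 such that for every x ∈ ℝ² and every r with r > r₀ and 8|x|^β ≤ r ≤ |x|/2, one has (1/64)·|x|^{−2β}·r² ≤ card(S ∩ B(x,r)) ≤ 6·|x|^{−2β}·r². -/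
private lemma rpow_le_div_const {β K t : ℝ} (hβ0 : 0 < β) (hβ1 : β < 1) (hK : 1 ≤ K)
    (ht : K ^ (1/(1-β)) ≤ t) : t ^ β ≤ t / K := by
  have hK0 : (0:ℝ) < K := by linarith
  have ht0 : 0 < t := lt_of_lt_of_le (Real.rpow_pos_of_pos hK0 _) ht
  have hb : (1:ℝ) - β ≠ 0 := by linarith
  have h1 : t ^ (β - 1) ≤ K⁻¹ := by
    calc t ^ (β-1) ≤ (K ^ (1/(1-β))) ^ (β-1) :=
          Real.rpow_le_rpow_of_nonpos (Real.rpow_pos_of_pos hK0 _) ht (by linarith)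
      _ = K ^ ((1/(1-β)) * (β-1)) := (Real.rpow_mul hK0.le _ _).symm
      _ = K ^ (-1 : ℝ) := by rw [show (1/(1-β)) * (β-1) = -1 by field_simp; ring]
      _ = K⁻¹ := Real.rpow_neg_one K
  calc t ^ β = t ^ (1 + (β-1)) := by norm_num
    _ = t * t ^ (β-1) := by rw [Real.rpow_add ht0, Real.rpow_one]
    _ ≤ t * K⁻¹ := mul_le_mul_of_nonneg_left h1 ht0.le
    _ = t / K := (div_eq_mul_inv t K).symm

private lemma rpow_le_quarter_add {β a : ℝ} (hβ0 : 0 < β) (hβ1 : β < 1) (ha : 0 ≤ a) :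
    a ^ β ≤ a / 4 + 4 ^ (1/(1-β)) := by
  set A := (4:ℝ) ^ (1/(1-β)) with hAdef
  have hA1 : (1:ℝ) ≤ A := by
    have := Real.rpow_le_rpow_of_exponent_le (by norm_num : (1:ℝ) ≤ 4)
      (div_nonneg zero_le_one (by linarith) : (0:ℝ) ≤ 1/(1-β))
    rwa [Real.rpow_zero] at this
  by_cases h : a ≤ A
  · have : a ^ β ≤ A := by
      by_cases h1 : a ≤ 1
      · exact le_trans (Real.rpow_le_one ha h1 hβ0.le) hA1
      · push_neg at h1
        calc a ^ β ≤ a ^ (1:ℝ) := Real.rpow_le_rpow_of_exponent_le h1.le hβ1.le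
          _ = a := Real.rpow_one a
          _ ≤ A := h
    linarith
  · push_neg at h
    have := rpow_le_div_const hβ0 hβ1 (by norm_num : (1:ℝ) ≤ 4) h.le
    linarith

private lemma embed2_coord_le (s : ℤ × ℤ) :
    |(s.1 : ℝ)| ≤ ‖embed2 s‖ ∧ |(s.2 : ℝ)| ≤ ‖embed2 s‖ := by
  have hnorm : ‖embed2 s‖ = Real.sqrt ((s.1:ℝ)^2 + (s.2:ℝ)^2) := by
    simp [embed2, EuclideanSpace.norm_eq, Fin.sum_univ_two, WithLp.equiv_symm_apply,
      sq_abs]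
  constructor
  · rw [hnorm, ← Real.sqrt_sq_eq_abs]
    exact Real.sqrt_le_sqrt (by nlinarith [sq_nonneg ((s.2:ℝ))])
  · rw [hnorm, ← Real.sqrt_sq_eq_abs]
    exact Real.sqrt_le_sqrt (by nlinarith [sq_nonneg ((s.1:ℝ))])

private lemma finite_ball_inter (S : Set (ℤ × ℤ)) (x : EuclideanSpace ℝ (Fin 2)) (r : ℝ) :
    {s ∈ S | embed2 s ∈ Metric.ball x r}.Finite := by
  set M : ℤ := ⌈‖x‖ + r⌉ with hM
  apply Set.Finite.subset (Set.finite_Icc ((-M, -M) : ℤ × ℤ) (M, M))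
  rintro s ⟨_, hball⟩
  have hd : ‖embed2 s‖ ≤ ‖x‖ + r := by
    have h1 : dist (embed2 s) x < r := Metric.mem_ball.mp hball
    have h2 : ‖embed2 s‖ - ‖x‖ ≤ ‖embed2 s - x‖ := norm_sub_norm_le _ _
    rw [← dist_eq_norm] at h2
    linarith
  have hMr : ‖x‖ + r ≤ (M : ℝ) := Int.le_ceil _
  obtain ⟨h1, h2⟩ := embed2_coord_le s
  have k1 : |s.1| ≤ M := by exact_mod_cast (by push_cast; linarith : (|s.1| : ℝ) ≤ (M:ℝ))
  have k2 : |s.2| ≤ M := by exact_mod_cast (by push_cast; linarith : (|s.2| : ℝ) ≤ (M:ℝ))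
  rw [abs_le] at k1 k2
  exact Set.mem_Icc.mpr ⟨⟨k1.1, k2.1⟩, ⟨k1.2, k2.2⟩⟩
set_option maxHeartbeats 2000000 in
open MeasureTheory in
/-- For a `β`-separated-covering set `S`, there is `r₀ > 0` such that for all `x ∈ ℝ²`
and all `r` with `r > r₀` and `8|x|^β ≤ r ≤ |x|/2` one has
`(1/64)·|x|^(-2β)·r² ≤ card(S ∩ B(x,r)) ≤ 6·|x|^(-2β)·r²`. -/
theorem card_inter_ball_two_sided (β : ℝ) (hβ0 : 0 < β) (hβ1 : β < 1)
    (S : Set (ℤ × ℤ)) (hS : SepCov β S) :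
    ∃ r₀ > (0 : ℝ), ∀ x : EuclideanSpace ℝ (Fin 2), ∀ r : ℝ, r > r₀ →
      8 * ‖x‖ ^ β ≤ r → r ≤ ‖x‖ / 2 →
      (1 / 64) * ‖x‖ ^ (-(2 * β)) * r ^ 2 ≤
          ({s ∈ S | embed2 s ∈ Metric.ball x r}.ncard : ℝ) ∧
      ({s ∈ S | embed2 s ∈ Metric.ball x r}.ncard : ℝ) ≤
          6 * ‖x‖ ^ (-(2 * β)) * r ^ 2 := by
  obtain ⟨-, -, hSep, hCov⟩ := hS
  have hβ' : (0:ℝ) < 1 - β := by linarith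
  refine ⟨16 + 12 ^ (1/(1-β)) + 8 * (1 + 4 ^ (1/(1-β))) + 2 ^ (1/β), by positivity, ?_⟩
  intro x r hr hr8 hrx
  set A : ℝ := (4:ℝ) ^ (1/(1-β)) with hAdef
  have hA1 : (1:ℝ) ≤ A := by
    have := Real.rpow_le_rpow_of_exponent_le (by norm_num : (1:ℝ) ≤ 4)
      (div_nonneg zero_le_one hβ'.le)
    rwa [Real.rpow_zero] at this
  have h12_1 : (1:ℝ) ≤ (12:ℝ) ^ (1/(1-β)) := by
    have := Real.rpow_le_rpow_of_exponent_le (by norm_num : (1:ℝ) ≤ 12)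
      (div_nonneg zero_le_one hβ'.le)
    rwa [Real.rpow_zero] at this
  have h2β0 : (0:ℝ) < (2:ℝ) ^ (1/β) := Real.rpow_pos_of_pos two_pos _
  have hr0 : (0:ℝ) < r := by linarith
  have hx2r : 2 * r ≤ ‖x‖ := by linarith
  have hx0 : (0:ℝ) < ‖x‖ := by linarith
  have hx32 : (32:ℝ) ≤ ‖x‖ := by linarith
  have hx12 : (12:ℝ) ^ (1/(1-β)) ≤ ‖x‖ := by linarith
  have hx8A : 8 * (1 + A) ≤ ‖x‖ := by linarith
  have hx2β : (2:ℝ) ^ (1/β) ≤ ‖x‖ := by linarith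
  set u : ℝ := ‖x‖ ^ β with hu
  have hu0 : (0:ℝ) < u := Real.rpow_pos_of_pos hx0 β
  have hu2 : (2:ℝ) ≤ u := by
    have h := Real.rpow_le_rpow h2β0.le hx2β hβ0.le
    rwa [← Real.rpow_mul (by norm_num : (0:ℝ) ≤ 2),
      show (1/β) * β = 1 by field_simp, Real.rpow_one] at h
  have h2βle : (2:ℝ) ^ β ≤ 2 := by
    have := Real.rpow_le_rpow_of_exponent_le (by norm_num : (1:ℝ) ≤ 2) hβ1.le
    rwa [Real.rpow_one] at this
  set T : Set (ℤ × ℤ) := {s ∈ S | embed2 s ∈ Metric.ball x r} with hT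
  have hTfin : T.Finite := finite_ball_inter S x r
  set F : Finset (ℤ × ℤ) := hTfin.toFinset with hF
  have hNcard : T.ncard = F.card := Set.ncard_eq_toFinset_card _ hTfin
  have hmemF : ∀ s, s ∈ F ↔ s ∈ S ∧ embed2 s ∈ Metric.ball x r := by
    intro s
    rw [hF, Set.Finite.mem_toFinset, hT]
    exact Iff.rfl
  set c : ENNReal := volume (Metric.ball (0 : EuclideanSpace ℝ (Fin 2)) 1) with hc
  have hc0 : c ≠ 0 := (Metric.measure_ball_pos volume _ one_pos).ne'
  have hctop : c ≠ ⊤ := measure_ball_lt_top.ne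
  have hvol_ball : ∀ (z : EuclideanSpace ℝ (Fin 2)) (ρ : ℝ), 0 ≤ ρ →
      volume (Metric.ball z ρ) = ENNReal.ofReal (ρ^2) * c := by
    intro z ρ hρ
    rw [Measure.addHaar_ball volume z hρ, finrank_euclideanSpace_fin]
  have hvol_cball : ∀ (z : EuclideanSpace ℝ (Fin 2)) (ρ : ℝ), 0 ≤ ρ →
      volume (Metric.closedBall z ρ) = ENNReal.ofReal (ρ^2) * c := by
    intro z ρ hρ
    rw [Measure.addHaar_closedBall volume z hρ, finrank_euclideanSpace_fin]
  have hxinv : ‖x‖ ^ (-(2*β)) = (u^2)⁻¹ := by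
    rw [Real.rpow_neg hx0.le]
    congr 1
    rw [mul_comm, Real.rpow_mul hx0.le, Real.rpow_two]
  -- upper bound
  set ρ₁ : ℝ := (‖x‖/2) ^ β with hρ₁def
  have hρ₁0 : 0 < ρ₁ := Real.rpow_pos_of_pos (by linarith) β
  have hρ₁u : ρ₁ ≤ u := Real.rpow_le_rpow (by linarith) (by linarith) hβ0.le
  have hρ₁half : u / 2 ≤ ρ₁ := by
    rw [hρ₁def, Real.div_rpow hx0.le (by norm_num : (0:ℝ) ≤ 2)]
    rw [← hu]
    exact div_le_div_of_nonneg_left hu0.le (by positivity) h2βle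
  have hnormF : ∀ s ∈ F, ‖x‖/2 ≤ ‖embed2 s‖ := by
    intro s hs
    obtain ⟨_, hball⟩ := (hmemF s).mp hs
    have h1 : dist (embed2 s) x < r := Metric.mem_ball.mp hball
    have h2 : ‖x‖ - ‖embed2 s‖ ≤ ‖x - embed2 s‖ := norm_sub_norm_le _ _
    rw [← dist_eq_norm, dist_comm] at h2
    linarith
  have hdisj : (↑F : Set (ℤ × ℤ)).PairwiseDisjoint
      (fun s => Metric.ball (embed2 s) ρ₁) := by
    intro s hs s' hs' hne
    have hsF : s ∈ F := hs
    have hs'F : s' ∈ F := hs'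
    apply Metric.ball_disjoint_ball
    rw [dist_eq_norm]
    have hsep := hSep s ((hmemF s).mp hsF).1 s' ((hmemF s').mp hs'F).1 hne
    have b1 : ρ₁ ≤ ‖embed2 s‖ ^ β :=
      Real.rpow_le_rpow (by linarith) (hnormF s hsF) hβ0.le
    have b2 : ρ₁ ≤ ‖embed2 s'‖ ^ β :=
      Real.rpow_le_rpow (by linarith) (hnormF s' hs'F) hβ0.le
    linarith
  have hsub : (⋃ s ∈ F, Metric.ball (embed2 s) ρ₁) ⊆ Metric.ball x ((9/8)*r) := by
    intro z hz
    simp only [Set.mem_iUnion] at hz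
    obtain ⟨s, hsF, hzs⟩ := hz
    obtain ⟨_, hball⟩ := (hmemF s).mp hsF
    have h1 : dist z (embed2 s) < ρ₁ := Metric.mem_ball.mp hzs
    have h2 : dist (embed2 s) x < r := Metric.mem_ball.mp hball
    have h3 : dist z x < ρ₁ + r :=
      lt_of_le_of_lt (dist_triangle z (embed2 s) x) (by linarith)
    exact Metric.mem_ball.mpr (lt_of_lt_of_le h3 (by linarith))
  have hpack : (F.card : ℝ) * ρ₁^2 ≤ ((9/8)*r)^2 := by
    have e1 : ∑ s ∈ F, volume (Metric.ball (embed2 s) ρ₁)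
        = volume (⋃ s ∈ F, Metric.ball (embed2 s) ρ₁) :=
      (measure_biUnion_finset hdisj (fun _ _ => measurableSet_ball)).symm
    have e2 := measure_mono (μ := volume) hsub
    have e3 : ∑ s ∈ F, volume (Metric.ball (embed2 s) ρ₁)
        = (F.card : ENNReal) * (ENNReal.ofReal (ρ₁^2) * c) := by
      rw [Finset.sum_congr rfl (fun s _ => hvol_ball (embed2 s) ρ₁ hρ₁0.le),
        Finset.sum_const, nsmul_eq_mul]
    have e4 : volume (Metric.ball x ((9/8)*r)) = ENNReal.ofReal (((9/8)*r)^2) * c :=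
      hvol_ball x _ (by linarith)
    have key : (F.card : ENNReal) * (ENNReal.ofReal (ρ₁^2) * c)
        ≤ ENNReal.ofReal (((9/8)*r)^2) * c := by
      rw [← e3, e1, ← e4]; exact e2
    rw [← mul_assoc, ENNReal.mul_le_mul_iff_left hc0 hctop] at key
    have key2 : ENNReal.ofReal ((F.card : ℝ) * ρ₁^2) ≤ ENNReal.ofReal (((9/8)*r)^2) := by
      rwa [ENNReal.ofReal_mul (by positivity), ENNReal.ofReal_natCast]
    exact (ENNReal.ofReal_le_ofReal_iff (by positivity)).mp key2
  have hupper : ((T.ncard : ℕ) : ℝ) ≤ 6 * ‖x‖ ^ (-(2*β)) * r^2 := by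
    rw [hNcard, hxinv, show (6:ℝ) * (u^2)⁻¹ * r^2 = 6*r^2/u^2 by ring,
      le_div_iff₀ (by positivity)]
    have h : (F.card:ℝ) * (u/2)^2 ≤ (F.card:ℝ) * ρ₁^2 :=
      mul_le_mul_of_nonneg_left
        (pow_le_pow_left₀ (by linarith : (0:ℝ) ≤ u/2) hρ₁half 2) (Nat.cast_nonneg _)
    have e2 : (F.card:ℝ) * (u/2)^2 = (F.card:ℝ) * u^2 / 4 := by ring
    have e : ((9/8:ℝ)*r)^2 = (81/64)*r^2 := by ring
    rw [e2] at h
    rw [e] at hpack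
    nlinarith [sq_nonneg r, h, hpack]
  -- lower bound
  have hcover : Metric.ball x (r/2) ⊆ ⋃ s ∈ F, Metric.closedBall (embed2 s) (4*u) := by
    intro y hy
    obtain ⟨s, hsS, hsd⟩ := hCov y
    have hyx : dist y x < r/2 := Metric.mem_ball.mp hy
    have hy_norm : ‖y‖ ≤ ‖x‖ + r/2 := by
      have h := norm_sub_norm_le y x
      rw [← dist_eq_norm] at h
      linarith
    have hy54 : ‖y‖ ≤ (5/4) * ‖x‖ := by linarith
    have h1b : ‖y‖ + 1 ≤ (3/2) * ‖x‖ := by linarith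
    have h1 : (‖y‖+1)^β ≤ (3/2) * u := by
      calc (‖y‖+1)^β ≤ ((3/2)*‖x‖)^β :=
            Real.rpow_le_rpow (by positivity) h1b hβ0.le
        _ = (3/2)^β * u := by rw [Real.mul_rpow (by norm_num) hx0.le, hu]
        _ ≤ (3/2) * u := by
            have h32 : ((3:ℝ)/2)^β ≤ 3/2 := by
              have := Real.rpow_le_rpow_of_exponent_le (by norm_num : (1:ℝ) ≤ 3/2) hβ1.le
              rwa [Real.rpow_one] at this
            exact mul_le_mul_of_nonneg_right h32 hu0.le
    have ha0 : (0:ℝ) ≤ ‖embed2 s‖ := norm_nonneg _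
    have haub : ‖embed2 s‖ - ‖y‖ ≤ ‖y - embed2 s‖ := by
      have h := norm_sub_norm_le (embed2 s) y
      rw [norm_sub_rev] at h
      linarith
    have hq : ‖embed2 s‖^β ≤ ‖embed2 s‖/4 + A := rpow_le_quarter_add hβ0 hβ1 ha0
    have hu12 : u ≤ ‖x‖/12 := rpow_le_div_const hβ0 hβ1 (by norm_num) hx12
    have ha2 : ‖embed2 s‖ ≤ 2*‖x‖ := by linarith
    have ha2β : ‖embed2 s‖^β ≤ 2*u := by
      calc ‖embed2 s‖^β ≤ (2*‖x‖)^β := Real.rpow_le_rpow ha0 ha2 hβ0.le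
        _ = 2^β * u := by rw [Real.mul_rpow (by norm_num) hx0.le, hu]
        _ ≤ 2*u := mul_le_mul_of_nonneg_right h2βle hu0.le
    have hdy : dist y (embed2 s) ≤ 4*u := by
      rw [dist_eq_norm]
      linarith
    have hsball : embed2 s ∈ Metric.ball x r := by
      rw [Metric.mem_ball]
      calc dist (embed2 s) x ≤ dist (embed2 s) y + dist y x := dist_triangle _ _ _
        _ < 4*u + r/2 := by rw [dist_comm (embed2 s) y]; linarith
        _ ≤ r := by linarith
    exact Set.mem_iUnion.mpr ⟨s, Set.mem_iUnion.mpr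
      ⟨(hmemF s).mpr ⟨hsS, hsball⟩, Metric.mem_closedBall.mpr hdy⟩⟩
  have hcov_vol : (r/2)^2 ≤ (F.card : ℝ) * (4*u)^2 := by
    have e1 : volume (Metric.ball x (r/2)) = ENNReal.ofReal ((r/2)^2) * c :=
      hvol_ball x _ (by linarith)
    have e2 : volume (Metric.ball x (r/2))
        ≤ ∑ s ∈ F, volume (Metric.closedBall (embed2 s) (4*u)) :=
      le_trans (measure_mono hcover) (measure_biUnion_finset_le F _)
    have e3 : ∑ s ∈ F, volume (Metric.closedBall (embed2 s) (4*u))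
        = (F.card : ENNReal) * (ENNReal.ofReal ((4*u)^2) * c) := by
      rw [Finset.sum_congr rfl (fun s _ => hvol_cball (embed2 s) (4*u) (by linarith)),
        Finset.sum_const, nsmul_eq_mul]
    have key : ENNReal.ofReal ((r/2)^2) * c
        ≤ (F.card : ENNReal) * (ENNReal.ofReal ((4*u)^2) * c) := by
      rw [← e1, ← e3]; exact e2
    rw [← mul_assoc, ENNReal.mul_le_mul_iff_left hc0 hctop] at key
    have key2 : ENNReal.ofReal ((r/2)^2) ≤ ENNReal.ofReal ((F.card : ℝ) * (4*u)^2) := by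
      rwa [ENNReal.ofReal_mul (by positivity), ENNReal.ofReal_natCast]
    exact (ENNReal.ofReal_le_ofReal_iff (by positivity)).mp key2
  have hlower : (1/64) * ‖x‖ ^ (-(2*β)) * r^2 ≤ ((T.ncard : ℕ) : ℝ) := by
    rw [hNcard, hxinv, show (1:ℝ)/64 * (u^2)⁻¹ * r^2 = (r^2/64)/u^2 by ring,
      div_le_iff₀ (by positivity)]
    have e2 : (F.card:ℝ) * (4*u)^2 = 16 * ((F.card:ℝ) * u^2) := by ring
    have e : ((r:ℝ)/2)^2 = r^2/4 := by ring
    rw [e2, e] at hcov_vol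
    linarith
  exact ⟨hlower, hupper⟩
end

section
/- Let β ∈ (0,1) and let S ⊆ ℤ² be β-separated-covering. Then there exists r₀ > 0 such that for every x ∈ ℝ² and every r with r > r₀ and r < 8|x|^β, one has card(S ∩ B(x,r)) ≤ 324. -/
open Metric MeasureTheory ENNReal
lemma packing {ι : Type*} (T : Finset ι) (f : ι → EuclideanSpace ℝ (Fin 2))
    (x : EuclideanSpace ℝ (Fin 2)) (r d : ℝ) (hd : 0 < d) (hr : 0 ≤ r)
    (hT : ∀ s ∈ T, f s ∈ ball x r)
    (hsep : ∀ s ∈ T, ∀ t ∈ T, s ≠ t → d ≤ dist (f s) (f t)) :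
    (T.card : ℝ) * (d/2)^2 ≤ (r + d/2)^2 := by
  have hd2 : 0 < d/2 := by linarith
  have hdisj : (T : Set ι).PairwiseDisjoint (fun s => ball (f s) (d/2)) := by
    intro s hs t ht hst
    exact ball_disjoint_ball (by linarith [hsep s hs t ht hst])
  have hsub : ∀ s ∈ T, ball (f s) (d/2) ⊆ ball x (r + d/2) := by
    intro s hs y hy
    have h1 : dist (f s) x < r := hT s hs
    have h2 : dist y (f s) < d/2 := hy
    calc dist y x ≤ dist y (f s) + dist (f s) x := dist_triangle _ _ _
      _ < r + d/2 := by linarith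
  have hU : volume (⋃ s ∈ T, ball (f s) (d/2)) = ∑ s ∈ T, volume (ball (f s) (d/2)) :=
    measure_biUnion_finset hdisj (fun s _ => measurableSet_ball)
  have hball : ∀ y : EuclideanSpace ℝ (Fin 2), ∀ ρ : ℝ, 0 ≤ ρ →
      volume (ball y ρ) = ENNReal.ofReal (ρ ^ 2) * volume (ball (0 : EuclideanSpace ℝ (Fin 2)) 1) := by
    intro y ρ hρ
    rw [Measure.addHaar_ball volume y hρ, finrank_euclideanSpace_fin]
  have hle : ∑ s ∈ T, volume (ball (f s) (d/2)) ≤ volume (ball x (r + d/2)) := by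
    rw [← hU]
    exact measure_mono (Set.iUnion₂_subset hsub)
  rw [hball x (r + d/2) (by linarith)] at hle
  have hsum : ∑ s ∈ T, volume (ball (f s) (d/2))
      = (T.card : ℝ≥0∞) * (ENNReal.ofReal ((d/2) ^ 2) * volume (ball (0 : EuclideanSpace ℝ (Fin 2)) 1)) := by
    rw [Finset.sum_congr rfl (fun s _ => hball (f s) (d/2) hd2.le), Finset.sum_const, nsmul_eq_mul]
  rw [hsum, ← mul_assoc] at hle
  have hc0 : volume (ball (0 : EuclideanSpace ℝ (Fin 2)) 1) ≠ 0 :=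
    (measure_ball_pos volume 0 one_pos).ne'
  have hct : volume (ball (0 : EuclideanSpace ℝ (Fin 2)) 1) ≠ ⊤ :=
    measure_ball_lt_top.ne
  have hle2 : (T.card : ℝ≥0∞) * ENNReal.ofReal ((d/2) ^ 2) ≤ ENNReal.ofReal ((r + d/2) ^ 2) :=
    (ENNReal.mul_le_mul_iff_left hc0 hct).mp hle
  rw [← ENNReal.ofReal_natCast, ← ENNReal.ofReal_mul (by positivity)] at hle2
  exact (ENNReal.ofReal_le_ofReal_iff (by positivity)).mp hle2


/-- For a `β`-separated-covering set `S`, there is `r₀ > 0` such that for all `x ∈ ℝ²`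
and all `r` with `r > r₀` and `r < 8|x|^β` one has `card(S ∩ B(x,r)) ≤ 324`. -/
theorem card_inter_ball_small_radius (β : ℝ) (hβ0 : 0 < β) (hβ1 : β < 1)
    (S : Set (ℤ × ℤ)) (hS : SepCov β S) :
    ∃ r₀ > (0 : ℝ), ∀ x : EuclideanSpace ℝ (Fin 2), ∀ r : ℝ, r > r₀ →
      r < 8 * ‖x‖ ^ β →
      {s ∈ S | embed2 s ∈ Metric.ball x r}.ncard ≤ 324 := by
  set M : ℝ := (16 : ℝ) ^ ((1:ℝ)/(1-β)) with hM
  have h1β : 0 < 1 - β := by linarith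
  have hM1 : (1:ℝ) ≤ M := Real.one_le_rpow (by norm_num) (by positivity)
  have hMpow : M ^ (1-β) = 16 := by
    rw [hM, ← Real.rpow_mul (by norm_num), one_div, inv_mul_cancel₀ h1β.ne', Real.rpow_one]
  refine ⟨8 * M ^ β + 1, by positivity, fun x r hr hr8 => ?_⟩
  -- ‖x‖ > M
  have hxM : M < ‖x‖ := by
    by_contra hc
    push_neg at hc
    have : ‖x‖ ^ β ≤ M ^ β := Real.rpow_le_rpow (norm_nonneg x) hc hβ0.le
    nlinarith
  have hx0 : 0 < ‖x‖ := lt_of_le_of_lt (by linarith) hxM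
  have hx16 : (16:ℝ) < ‖x‖ ^ (1-β) := by
    rw [← hMpow]
    exact Real.rpow_lt_rpow (by linarith) hxM h1β
  have hxβpos : 0 < ‖x‖ ^ β := Real.rpow_pos_of_pos hx0 β
  have hsplit : ‖x‖ = ‖x‖ ^ β * ‖x‖ ^ (1-β) := by
    rw [← Real.rpow_add hx0]; norm_num
  have hkey : 16 * ‖x‖ ^ β < ‖x‖ := by
    calc 16 * ‖x‖ ^ β < ‖x‖ ^ (1-β) * ‖x‖ ^ β := by nlinarith
      _ = ‖x‖ := by rw [mul_comm, ← hsplit]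
  have hrx : r < ‖x‖ / 2 := by linarith
  -- lower bound on norms of points in the ball
  have hnorm : ∀ s : ℤ × ℤ, embed2 s ∈ ball x r → ‖x‖/2 < ‖embed2 s‖ := by
    intro s hs
    have : dist (embed2 s) x < r := mem_ball.mp hs
    have h2 : ‖x‖ - ‖embed2 s‖ ≤ dist (embed2 s) x := by
      rw [dist_eq_norm]
      calc ‖x‖ - ‖embed2 s‖ ≤ ‖embed2 s - x‖ := by
            have := norm_sub_norm_le (embed2 s - x) (embed2 s)
            simp at this
            linarith [abs_le.mp (abs_norm_sub_norm_le (embed2 s) x)]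
        _ = ‖embed2 s - x‖ := rfl
    linarith
  set e : ℝ := (‖x‖/2) ^ β with he
  have hepos : 0 < e := Real.rpow_pos_of_pos (by linarith) β
  -- r < 16 e
  have hr16e : r < 16 * e := by
    have h2β : (2:ℝ) ^ β ≤ 2 := by
      calc (2:ℝ) ^ β ≤ 2 ^ (1:ℝ) := Real.rpow_le_rpow_of_exponent_le (by norm_num) hβ1.le
        _ = 2 := Real.rpow_one 2
    have : ‖x‖ ^ β = 2 ^ β * e := by
      rw [he, ← Real.mul_rpow (by norm_num) (by linarith)]
      ring_nf
    nlinarith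
  have hMβ : 0 < M ^ β := Real.rpow_pos_of_pos (lt_of_lt_of_le one_pos hM1) β
  have hr0 : 0 < r := by linarith
  -- separation
  by_cases hfin : {s ∈ S | embed2 s ∈ Metric.ball x r}.Finite
  · set T := hfin.toFinset with hT
    have hcard : {s ∈ S | embed2 s ∈ Metric.ball x r}.ncard = T.card :=
      Set.ncard_eq_toFinset_card _ hfin
    have hpack := packing T embed2 x r (2*e) (by linarith) hr0.le
      (fun s hs => (hfin.mem_toFinset.mp hs).2)
      (fun s hs t ht hst => by
        have hsS := hfin.mem_toFinset.mp hs
        have htS := hfin.mem_toFinset.mp ht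
        have hsep := hS.2.2.1 s hsS.1 t htS.1 hst
        have h1 : e ≤ ‖embed2 s‖ ^ β :=
          Real.rpow_le_rpow (by linarith) (hnorm s hsS.2).le hβ0.le
        have h2 : e ≤ ‖embed2 t‖ ^ β :=
          Real.rpow_le_rpow (by linarith) (hnorm t htS.2).le hβ0.le
        rw [dist_eq_norm]
        linarith)
    have he2 : (2*e)/2 = e := by ring
    rw [he2] at hpack
    have hlt : (T.card : ℝ) * e^2 < 289 * e^2 := by
      calc (T.card : ℝ) * e^2 ≤ (r + e)^2 := hpack
        _ < (17*e)^2 := by nlinarith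
        _ = 289 * e^2 := by ring
    have hlt2 : (T.card : ℝ) ≤ 324 := by
      have := (mul_lt_mul_iff_left₀ (by positivity : (0:ℝ) < e^2)).mp hlt
      linarith
    rw [hcard]
    exact_mod_cast hlt2
  · rw [Set.Infinite.ncard hfin]
    exact Nat.zero_le _
end

section
/- Let β ∈ (0,1) and let S ⊆ ℤ² be β-separated-covering. Then there exists r₀ > 0 such that for every x ∈ ℝ² and every r with r > r₀ and |x|^β ≤ r ≤ 8|x|^β, one has card(S ∩ B(x,r)) ≤ 324·|x|^{−2β}·r². -/
lemma coord_abs_le_norm (y : EuclideanSpace ℝ (Fin 2)) (i : Fin 2) : |y i| ≤ ‖y‖ := by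
  rw [EuclideanSpace.norm_eq, Fin.sum_univ_two]
  rw [← Real.sqrt_sq_eq_abs]
  apply Real.sqrt_le_sqrt
  fin_cases i <;> simp [Real.norm_eq_abs, sq_abs] <;> positivity

lemma norm_lt_of_coords (y : EuclideanSpace ℝ (Fin 2)) (c : ℝ) (hc : 0 < c)
    (h0 : |y 0| < c) (h1 : |y 1| < c) : ‖y‖ < 2 * c := by
  rw [EuclideanSpace.norm_eq, Fin.sum_univ_two]
  simp only [Real.norm_eq_abs]
  have e0 : |y 0| ^ 2 < c ^ 2 := pow_lt_pow_left₀ h0 (abs_nonneg _) two_ne_zero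
  have e1 : |y 1| ^ 2 < c ^ 2 := pow_lt_pow_left₀ h1 (abs_nonneg _) two_ne_zero
  have : |y 0| ^ 2 + |y 1| ^ 2 < (2 * c) ^ 2 := by nlinarith
  calc Real.sqrt (|y 0| ^ 2 + |y 1| ^ 2) < Real.sqrt ((2 * c) ^ 2) :=
        Real.sqrt_lt_sqrt (by positivity) this
    _ = 2 * c := Real.sqrt_sq (by positivity)

lemma abs_sub_lt_of_floor_div_eq (a b c : ℝ) (hc : 0 < c)
    (h : ⌊a / c⌋ = ⌊b / c⌋) : |a - b| < c := by
  have h1 : a / c - b / c < 1 := by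
    have := Int.lt_floor_add_one (a / c)
    have := Int.floor_le (b / c)
    rw [h] at *
    linarith
  have h2 : b / c - a / c < 1 := by
    have := Int.lt_floor_add_one (b / c)
    have := Int.floor_le (a / c)
    rw [h] at *
    linarith
  have : |a / c - b / c| < 1 := abs_lt.2 ⟨by linarith, h1⟩
  rw [div_sub_div_same, abs_div, abs_of_pos hc, div_lt_one hc] at this
  exact this

/-- For a `β`-separated-covering set `S`, there is `r₀ > 0` such that for all `x ∈ ℝ²`
and all `r` with `r > r₀` and `|x|^β ≤ r ≤ 8|x|^β` one has
`card(S ∩ B(x,r)) ≤ 324·|x|^(-2β)·r²`. -/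
theorem card_inter_ball_intermediate (β : ℝ) (hβ0 : 0 < β) (hβ1 : β < 1)
    (S : Set (ℤ × ℤ)) (hS : SepCov β S) :
    ∃ r₀ > (0 : ℝ), ∀ x : EuclideanSpace ℝ (Fin 2), ∀ r : ℝ, r > r₀ →
      ‖x‖ ^ β ≤ r → r ≤ 8 * ‖x‖ ^ β →
      ({s ∈ S | embed2 s ∈ Metric.ball x r}.ncard : ℝ) ≤
        324 * ‖x‖ ^ (-(2 * β)) * r ^ 2 := by
  obtain ⟨-, -, hsep, -⟩ := hS
  set ε : ℝ := 1 - (2 : ℝ) ^ (-(1 / β)) with hε_def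
  have h2b : (2 : ℝ) ^ (-(1 / β)) < 1 :=
    Real.rpow_lt_one_of_one_lt_of_neg one_lt_two (neg_lt_zero.mpr (by positivity))
  have h2bpos : (0 : ℝ) < (2 : ℝ) ^ (-(1 / β)) := Real.rpow_pos_of_pos two_pos _
  have hε : 0 < ε := by simp only [hε_def]; linarith
  set M : ℝ := (8 / ε) ^ (1 / (1 - β)) with hM_def
  have hM : 0 < M := Real.rpow_pos_of_pos (by positivity) _
  clear_value ε M
  refine ⟨8 * M ^ β, mul_pos (by norm_num) (Real.rpow_pos_of_pos hM β), ?_⟩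
  intro x r hr h1 h2
  -- ‖x‖ > 0
  have hx : 0 < ‖x‖ := by
    rcases eq_or_lt_of_le (norm_nonneg x) with h | h
    · exfalso
      rw [← h, Real.zero_rpow hβ0.ne'] at h2
      have : (0:ℝ) < 8 * M ^ β := by positivity
      linarith
    · exact h
  -- M < ‖x‖
  have hMx : M < ‖x‖ := by
    by_contra hcon
    push_neg at hcon
    have : ‖x‖ ^ β ≤ M ^ β := Real.rpow_le_rpow (norm_nonneg x) hcon hβ0.le
    linarith
  -- r ≤ ε * ‖x‖
  have hM1β : M ^ (1 - β) = 8 / ε := by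
    rw [hM_def, ← Real.rpow_mul (by positivity), one_div,
      inv_mul_cancel₀ (by linarith : (1:ℝ) - β ≠ 0), Real.rpow_one]
  have hre : r ≤ ε * ‖x‖ := by
    have hxsplit : ‖x‖ = ‖x‖ ^ (1 - β) * ‖x‖ ^ β := by
      rw [← Real.rpow_add hx]; norm_num
    have hge : 8 / ε ≤ ‖x‖ ^ (1 - β) := by
      rw [← hM1β]
      exact Real.rpow_le_rpow hM.le hMx.le (by linarith)
    have hxb : 0 < ‖x‖ ^ β := Real.rpow_pos_of_pos hx β
    have h8 : 8 * ‖x‖ ^ β ≤ ε * ‖x‖ := by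
      calc 8 * ‖x‖ ^ β = ε * (8 / ε) * ‖x‖ ^ β := by field_simp
        _ ≤ ε * ‖x‖ ^ (1 - β) * ‖x‖ ^ β := by
            exact mul_le_mul_of_nonneg_right
              (mul_le_mul_of_nonneg_left hge hε.le) hxb.le
        _ = ‖x‖ ^ (1 - β) * ‖x‖ ^ β * ε := by ring
        _ = ε * ‖x‖ := by rw [← hxsplit]; ring
    linarith
  set d : ℝ := ‖x‖ ^ β with hd_def
  have hd : 0 < d := Real.rpow_pos_of_pos hx β
  have hrpos : 0 < r := lt_of_lt_of_le hd h1
  have hlow : ∀ s : ℤ × ℤ, embed2 s ∈ Metric.ball x r → d / 2 ≤ ‖embed2 s‖ ^ β := by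
    intro s hs
    rw [Metric.mem_ball, dist_eq_norm] at hs
    have h3 : ‖x‖ - r ≤ ‖embed2 s‖ := by
      have h4 := norm_sub_norm_le x (embed2 s)
      rw [norm_sub_rev] at h4
      linarith
    have h5 : (2:ℝ) ^ (-(1/β)) * ‖x‖ ≤ ‖embed2 s‖ := by
      have he : ‖x‖ - ε * ‖x‖ = (2:ℝ) ^ (-(1/β)) * ‖x‖ := by rw [hε_def]; ring
      linarith
    have h6 : ((2:ℝ) ^ (-(1/β)) * ‖x‖) ^ β ≤ ‖embed2 s‖ ^ β :=
      Real.rpow_le_rpow (by positivity) h5 hβ0.le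
    have h7 : ((2:ℝ) ^ (-(1/β)) * ‖x‖) ^ β = d / 2 := by
      rw [Real.mul_rpow h2bpos.le (norm_nonneg x),
        ← Real.rpow_mul (by norm_num : (0:ℝ) ≤ 2), hd_def]
      have hne : -(1/β) * β = -1 := by field_simp
      rw [hne, Real.rpow_neg_one]
      ring
    linarith
  have hsep' : ∀ s ∈ S, embed2 s ∈ Metric.ball x r → ∀ s' ∈ S,
      embed2 s' ∈ Metric.ball x r → s ≠ s' → d ≤ ‖embed2 s - embed2 s'‖ := by
    intro s hs hbs s' hs' hbs' hne
    have hgt := hsep s hs s' hs' hne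
    have l1 := hlow s hbs
    have l2 := hlow s' hbs'
    linarith
  clear_value d
  set c : ℝ := d / 2 with hc_def
  have hc : 0 < c := by rw [hc_def]; positivity
  clear_value c
  set f : ℤ × ℤ → ℤ × ℤ := fun s => (⌊(s.1 : ℝ) / c⌋, ⌊(s.2 : ℝ) / c⌋) with hf_def
  set lo : ℤ × ℤ := (⌊(x 0 - r) / c⌋, ⌊(x 1 - r) / c⌋) with hlo_def
  set hi : ℤ × ℤ := (⌊(x 0 + r) / c⌋, ⌊(x 1 + r) / c⌋) with hhi_def
  have hmaps : ∀ s ∈ {s ∈ S | embed2 s ∈ Metric.ball x r},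
      f s ∈ (↑(Finset.Icc lo hi) : Set (ℤ × ℤ)) := by
    intro s hs
    obtain ⟨-, hball⟩ := hs
    rw [Metric.mem_ball, dist_eq_norm] at hball
    have c0 : |(s.1 : ℝ) - x 0| ≤ ‖embed2 s - x‖ := coord_abs_le_norm (embed2 s - x) 0
    have c1 : |(s.2 : ℝ) - x 1| ≤ ‖embed2 s - x‖ := coord_abs_le_norm (embed2 s - x) 1
    rw [abs_le] at c0 c1
    simp only [Finset.coe_Icc, Set.mem_Icc, hlo_def, hhi_def, hf_def, Prod.le_def]
    refine ⟨⟨?_, ?_⟩, ?_, ?_⟩ <;>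
      apply Int.floor_le_floor <;>
      · gcongr
        · linarith [c0.1, c0.2, c1.1, c1.2]
  have hinj : Set.InjOn f {s ∈ S | embed2 s ∈ Metric.ball x r} := by
    intro s hs s' hs' hfe
    by_contra hne
    have hdist := hsep' s hs.1 hs.2 s' hs'.1 hs'.2 hne
    have e1 : |(s.1:ℝ) - s'.1| < c :=
      abs_sub_lt_of_floor_div_eq _ _ _ hc (congrArg Prod.fst hfe)
    have e2 : |(s.2:ℝ) - s'.2| < c :=
      abs_sub_lt_of_floor_div_eq _ _ _ hc (congrArg Prod.snd hfe)
    have hlt := norm_lt_of_coords (embed2 s - embed2 s') c hc e1 e2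
    rw [hc_def] at hlt
    linarith
  have hcard := Set.ncard_le_ncard_of_injOn f hmaps hinj (Finset.Icc lo hi).finite_toSet
  rw [Set.ncard_coe_finset] at hcard
  have hcard2 : (Finset.Icc lo hi).card
      = (Finset.Icc lo.1 hi.1).card * (Finset.Icc lo.2 hi.2).card := by
    rw [Finset.Icc_prod_def, Finset.card_product]
  have key : ∀ a : ℝ, ((Finset.Icc ⌊(a - r)/c⌋ ⌊(a + r)/c⌋).card : ℝ) ≤ 6 * (r / d) := by
    intro a
    have hb : ((Finset.Icc ⌊(a - r)/c⌋ ⌊(a + r)/c⌋).card : ℤ)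
        = max (⌊(a + r)/c⌋ + 1 - ⌊(a - r)/c⌋) 0 := by
      rw [Int.card_Icc]; exact Int.toNat_eq_max _
    have hbR := congrArg (Int.cast : ℤ → ℝ) hb
    push_cast at hbR
    have h6 : (0:ℝ) ≤ 6 * (r / d) := mul_nonneg (by norm_num) (div_nonneg hrpos.le hd.le)
    rw [hbR]
    apply max_le _ h6
    have f1 : ((⌊(a + r)/c⌋ : ℤ) : ℝ) ≤ (a + r)/c := Int.floor_le _
    have f2 : (a - r)/c - 1 < ((⌊(a - r)/c⌋ : ℤ) : ℝ) := Int.sub_one_lt_floor _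
    have f3 : (a + r)/c - (a - r)/c = 4 * (r / d) := by
      field_simp [hc_def]; rw [hc_def]; ring
    have f4 : (2:ℝ) ≤ 2 * (r / d) := by
      have : 1 ≤ r / d := (one_le_div hd).2 h1
      linarith
    linarith
  calc ({s ∈ S | embed2 s ∈ Metric.ball x r}.ncard : ℝ)
      ≤ ((Finset.Icc lo hi).card : ℝ) := by exact_mod_cast hcard
    _ = ((Finset.Icc lo.1 hi.1).card : ℝ) * ((Finset.Icc lo.2 hi.2).card : ℝ) := by
        rw [hcard2]; push_cast; ring
    _ ≤ (6 * (r / d)) * (6 * (r / d)) :=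
        mul_le_mul (key (x 0)) (key (x 1))
          (Nat.cast_nonneg _) (mul_nonneg (by norm_num) (div_nonneg hrpos.le hd.le))
    _ ≤ 324 * ‖x‖ ^ (-(2 * β)) * r ^ 2 := by
        have hxneg : ‖x‖ ^ (-(2 * β)) = (d ^ 2)⁻¹ := by
          rw [Real.rpow_neg (norm_nonneg x), mul_comm (2:ℝ) β,
            Real.rpow_mul (norm_nonneg x), ← hd_def, Real.rpow_two]
        have heq : (6 * (r / d)) * (6 * (r / d)) = 36 * (d ^ 2)⁻¹ * r ^ 2 := by
          field_simp; ring
        rw [heq, hxneg]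
        have hnn : (0:ℝ) ≤ (d ^ 2)⁻¹ * r ^ 2 := by
          have : (0:ℝ) < d ^ 2 := by positivity
          positivity
        nlinarith
end

section
/- Let β ∈ (0,1) and let S ⊆ ℤ² be β-separated-covering. Then there exists r₀ > 0 such that for every r ≥ r₀, the number of points of S in the closed annulus {y ∈ ℝ² : r/2 ≤ |y| ≤ r} is at most 12·r^{2−2β}. -/
/-- For a `β`-separated-covering set `S`, there is `r₀ > 0` such that for every `r ≥ r₀`
the closed annulus `{y : r/2 ≤ |y| ≤ r}` contains at most `12·r^(2-2β)` points of `S`. -/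
theorem card_inter_annulus_le (β : ℝ) (hβ0 : 0 < β) (hβ1 : β < 1)
    (S : Set (ℤ × ℤ)) (hS : SepCov β S) :
    ∃ r₀ > (0 : ℝ), ∀ r : ℝ, r₀ ≤ r →
      ({s ∈ S | r / 2 ≤ ‖embed2 s‖ ∧ ‖embed2 s‖ ≤ r}.ncard : ℝ) ≤
        12 * r ^ (2 - 2 * β) := by
  obtain ⟨-, -, hsep, -⟩ := hS
  refine ⟨2, by norm_num, fun r hr => ?_⟩
  have hr0 : (0 : ℝ) < r := by linarith
  have hrpos : (0 : ℝ) ≤ 12 * r ^ (2 - 2 * β) := by positivity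
  set T : Set (ℤ × ℤ) := {s ∈ S | r / 2 ≤ ‖embed2 s‖ ∧ ‖embed2 s‖ ≤ r} with hT
  by_cases hfin : T.Finite
  swap
  · rw [Set.Infinite.ncard (by exact hfin)]
    simpa using hrpos
  -- set up the packing radius
  set ρ : ℝ := (r / 2) ^ β with hρ
  have hhalf : (1 : ℝ) ≤ r / 2 := by linarith
  have hρ1 : (1 : ℝ) ≤ ρ := by
    calc (1 : ℝ) = (1 : ℝ) ^ β := (Real.one_rpow β).symm
      _ ≤ (r / 2) ^ β := Real.rpow_le_rpow (by norm_num) hhalf (le_of_lt hβ0)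
  have hρ0 : (0 : ℝ) < ρ := by linarith
  have hρle : ρ ≤ r / 2 := by
    calc ρ ≤ (r / 2) ^ (1 : ℝ) :=
          Real.rpow_le_rpow_of_exponent_le hhalf (le_of_lt hβ1)
      _ = r / 2 := Real.rpow_one _
  -- each point of T has norm ≥ r/2, hence its β-power is ≥ ρ
  have hρs : ∀ s ∈ T, ρ ≤ ‖embed2 s‖ ^ β := by
    intro s hs
    exact Real.rpow_le_rpow (by linarith) hs.2.1 (le_of_lt hβ0)
  -- disjointness of balls
  have hdisj : (hfin.toFinset : Set (ℤ × ℤ)).PairwiseDisjoint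
      (fun s => Metric.ball (embed2 s) ρ) := by
    intro s hs s' hs' hne
    rw [Set.Finite.coe_toFinset] at hs hs'
    apply Metric.ball_disjoint_ball
    rw [dist_eq_norm]
    have := hsep s hs.1 s' hs'.1 hne
    have h1 := hρs s hs
    have h2 := hρs s' hs'
    linarith
  -- balls are contained in a big ball
  have hsub : (⋃ s ∈ hfin.toFinset, Metric.ball (embed2 s) ρ) ⊆
      Metric.ball (0 : EuclideanSpace ℝ (Fin 2)) (r + ρ) := by
    intro y hy
    simp only [Set.mem_iUnion] at hy
    obtain ⟨s, hs, hy⟩ := hy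
    rw [Set.Finite.mem_toFinset] at hs
    rw [Metric.mem_ball] at hy ⊢
    have h1 : dist y (embed2 s) < ρ := hy
    have h2 : ‖embed2 s‖ ≤ r := hs.2.2
    calc dist y 0 ≤ dist y (embed2 s) + dist (embed2 s) 0 := dist_triangle _ _ _
      _ < ρ + r := by
          rw [dist_zero_right]
          linarith
      _ = r + ρ := by ring
  -- volume comparison
  have hvol : (hfin.toFinset.card : ENNReal) * MeasureTheory.volume
        (Metric.ball (0 : EuclideanSpace ℝ (Fin 2)) ρ) ≤
      MeasureTheory.volume (Metric.ball (0 : EuclideanSpace ℝ (Fin 2)) (r + ρ)) := by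
    have hmeas : ∀ s ∈ hfin.toFinset, MeasurableSet (Metric.ball (embed2 s) ρ) :=
      fun s _ => measurableSet_ball
    have := MeasureTheory.measure_biUnion_finset hdisj hmeas (μ := MeasureTheory.volume)
    have hball : ∀ s : ℤ × ℤ, MeasureTheory.volume (Metric.ball (embed2 s) ρ) =
        MeasureTheory.volume (Metric.ball (0 : EuclideanSpace ℝ (Fin 2)) ρ) := by
      intro s
      rw [EuclideanSpace.volume_ball, EuclideanSpace.volume_ball]
    calc (hfin.toFinset.card : ENNReal) * MeasureTheory.volume
          (Metric.ball (0 : EuclideanSpace ℝ (Fin 2)) ρ)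
        = ∑ s ∈ hfin.toFinset, MeasureTheory.volume (Metric.ball (embed2 s) ρ) := by
          rw [Finset.sum_congr rfl (fun s _ => hball s), Finset.sum_const, nsmul_eq_mul]
      _ = MeasureTheory.volume (⋃ s ∈ hfin.toFinset, Metric.ball (embed2 s) ρ) := this.symm
      _ ≤ _ := MeasureTheory.measure_mono hsub
  -- convert to a real inequality
  have hN : (hfin.toFinset.card : ℝ) * ρ ^ 2 ≤ (r + ρ) ^ 2 := by
    rw [EuclideanSpace.volume_ball, EuclideanSpace.volume_ball] at hvol
    set C : ENNReal := ENNReal.ofReal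
      (Real.sqrt Real.pi ^ Fintype.card (Fin 2) /
        Real.Gamma (Fintype.card (Fin 2) / 2 + 1)) with hC
    have hCpos : 0 < C := by
      rw [hC]
      apply ENNReal.ofReal_pos.mpr
      have harg : ((Fintype.card (Fin 2) : ℝ) / 2 + 1) = 2 := by
        simp [Fintype.card_fin]; norm_num
      rw [harg, Real.Gamma_two, div_one]
      have := Real.sqrt_pos.mpr Real.pi_pos
      positivity
    have hCne : C ≠ ⊤ := ENNReal.ofReal_ne_top
    rw [← mul_assoc] at hvol
    have hvol2 : (hfin.toFinset.card : ENNReal) * ENNReal.ofReal ρ ^ Fintype.card (Fin 2) ≤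
        ENNReal.ofReal (r + ρ) ^ Fintype.card (Fin 2) :=
      (ENNReal.mul_le_mul_iff_left hCpos.ne' hCne).mp hvol
    have hcast : (hfin.toFinset.card : ENNReal) * ENNReal.ofReal ρ ^ Fintype.card (Fin 2) =
        ENNReal.ofReal ((hfin.toFinset.card : ℝ) * ρ ^ 2) := by
      rw [ENNReal.ofReal_mul (by positivity), ENNReal.ofReal_natCast,
        ENNReal.ofReal_pow (le_of_lt hρ0)]
      norm_num
    have hcast2 : ENNReal.ofReal (r + ρ) ^ Fintype.card (Fin 2) =
        ENNReal.ofReal ((r + ρ) ^ 2) := by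
      rw [ENNReal.ofReal_pow (by positivity)]
      norm_num
    rw [hcast, hcast2] at hvol2
    exact (ENNReal.ofReal_le_ofReal_iff (by positivity)).mp hvol2
  -- arithmetic conclusion
  have hcard : T.ncard = hfin.toFinset.card := Set.ncard_eq_toFinset_card T hfin
  rw [hcard]
  have hsq : ((r + ρ)) ^ 2 ≤ (9 / 4) * r ^ 2 := by nlinarith
  have hρsq : ρ ^ 2 = (r / 2) ^ (2 * β) := by
    rw [hρ, ← Real.rpow_natCast ((r / 2) ^ β) 2, ← Real.rpow_mul (by linarith)]
    norm_num [mul_comm]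
  have hfinal : (9 / 4) * r ^ 2 ≤ 12 * r ^ (2 - 2 * β) * ρ ^ 2 := by
    rw [hρsq, Real.div_rpow (by linarith) (by norm_num)]
    have h2 : (2 : ℝ) ^ (2 * β) ≤ 4 := by
      calc (2 : ℝ) ^ (2 * β) ≤ (2 : ℝ) ^ (2 : ℝ) :=
            Real.rpow_le_rpow_of_exponent_le (by norm_num) (by linarith)
        _ = 4 := by
            rw [show (2 : ℝ) = ((2 : ℕ) : ℝ) by norm_num, Real.rpow_natCast]
            norm_num
    have h2pos : (0 : ℝ) < (2 : ℝ) ^ (2 * β) := by positivity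
    have hmul : r ^ (2 - 2 * β) * r ^ (2 * β) = r ^ 2 := by
      rw [← Real.rpow_add hr0]
      norm_num
    have heq : 12 * r ^ (2 - 2 * β) * (r ^ (2 * β) / (2 : ℝ) ^ (2 * β)) =
        12 * r ^ 2 / (2 : ℝ) ^ (2 * β) := by
      rw [← hmul]; ring
    rw [heq, le_div_iff₀ h2pos]
    nlinarith [mul_le_mul_of_nonneg_left h2 (by positivity : (0:ℝ) ≤ 9 / 4 * r ^ 2), sq_nonneg r]
  have hρ2pos : (0 : ℝ) < ρ ^ 2 := by positivity
  nlinarith [hN, hfinal, hρ2pos]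
end

section
/- Let d ∈ ℕ, d ≥ 1, let E ⊆ ℝ^d and let ρ > 0. Suppose that for every x ∈ E and every δ > 0 there exist r ∈ (0,1), t ∈ (0,δ) and N ∈ ℕ satisfying N·t^ρ ≤ r^d, such that B(x,r) ∩ E can be covered by N sets each of diameter at most t. Then the Hausdorff dimension of E is at most ρ. -/
open Set Metric MeasureTheory Filter
open scoped ENNReal NNReal

/-- Key lemma: the `s`-dimensional Hausdorff measure of `E ∩ ball 0 R` vanishes for `s > ρ`. -/
lemma aux_hausdorff_zero (d : ℕ) (E : Set (EuclideanSpace ℝ (Fin d)))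
    (ρ : ℝ) (hρ : 0 < ρ)
    (h : ∀ x ∈ E, ∀ δ > (0 : ℝ), ∃ r ∈ Set.Ioo (0 : ℝ) 1, ∃ t ∈ Set.Ioo (0 : ℝ) δ,
      ∃ N : ℕ, (N : ℝ) * t ^ ρ ≤ r ^ d ∧
        ∃ U : Fin N → Set (EuclideanSpace ℝ (Fin d)),
          (Metric.ball x r ∩ E ⊆ ⋃ i, U i) ∧
          ∀ i, EMetric.diam (U i) ≤ ENNReal.ofReal t)
    (s : ℝ) (hs : ρ < s) (R : ℝ) :
    μH[s] (E ∩ ball 0 R) = 0 := by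
  classical
  set F : Set (EuclideanSpace ℝ (Fin d)) := E ∩ ball 0 R with hF
  set v₁ : ℝ≥0∞ := volume (ball (0 : EuclideanSpace ℝ (Fin d)) 1) with hv₁
  set V : ℝ≥0∞ := volume (ball (0 : EuclideanSpace ℝ (Fin d)) (R + 1)) with hV
  have hv₁0 : v₁ ≠ 0 := (measure_ball_pos volume _ one_pos).ne'
  have hv₁top : v₁ ≠ ⊤ := measure_ball_lt_top.ne
  have hVtop : V ≠ ⊤ := measure_ball_lt_top.ne
  set C : ℝ≥0∞ := ENNReal.ofReal ((5 : ℝ) ^ d) * (V / v₁) with hC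
  have hCtop : C ≠ ⊤ := by
    refine ENNReal.mul_ne_top ENNReal.ofReal_ne_top ?_
    exact (ENNReal.div_lt_top hVtop hv₁0).ne
  -- the covers at scale δ_n = (n+1)⁻¹
  have key : ∀ n : ℕ, ∃ (ι : Type) (_ : Countable ι) (T : ι → Set (EuclideanSpace ℝ (Fin d))),
      (F ⊆ ⋃ i, T i) ∧ (∀ i, EMetric.diam (T i) ≤ ENNReal.ofReal (((n : ℝ) + 1)⁻¹)) ∧
      ∑' i, EMetric.diam (T i) ^ s ≤ C * ENNReal.ofReal ((((n : ℝ) + 1)⁻¹) ^ (s - ρ)) := by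
    intro n
    set δ : ℝ := ((n : ℝ) + 1)⁻¹ with hδ
    have hδ0 : 0 < δ := by positivity
    choose! r hr t ht N hN U hU hdiam using fun x : F => h x.1 x.2.1 δ hδ0
    -- Vitali covering
    obtain ⟨u, -, hdisj, hcov⟩ :=
      Vitali.exists_disjoint_subfamily_covering_enlargement_closedBall (univ : Set F)
        (fun x : F => (x : EuclideanSpace ℝ (Fin d))) (fun x => r x / 5) (1 / 5)
        (fun a _ => by have := (hr a).2; linarith) 4 (by norm_num)
    -- u is countable
    have hucount : u.Countable := by
      have hdisj' : u.PairwiseDisjoint fun a : F => ball (a : EuclideanSpace ℝ (Fin d)) (r a / 5) :=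
        hdisj.mono fun a => ball_subset_closedBall
      exact hdisj'.countable_of_isOpen (fun a _ => isOpen_ball)
        (fun a _ => ⟨a, mem_ball_self (by have := (hr a).1; linarith)⟩)
    haveI : Countable ↥u := hucount.to_subtype
    refine ⟨(Σ b : ↥u, Fin (N b.1)), inferInstance, fun p => U p.1.1 p.2, ?_, ?_, ?_⟩
    · -- covering
      intro x hx
      obtain ⟨b, hb, hsub⟩ := hcov ⟨x, hx⟩ (mem_univ _)
      have hxb : x ∈ ball (b : EuclideanSpace ℝ (Fin d)) (r b) := by
        have h1 : x ∈ closedBall ((⟨x, hx⟩ : F) : EuclideanSpace ℝ (Fin d)) (r ⟨x, hx⟩ / 5) :=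
          mem_closedBall_self (by have := (hr ⟨x, hx⟩).1; linarith)
        have h2 := hsub h1
        have h3 : (4 : ℝ) * (r b / 5) < r b := by have := (hr b).1; linarith
        exact lt_of_le_of_lt (mem_closedBall.1 h2) h3
      have := hU b ⟨hxb, hx.1⟩
      obtain ⟨_, ⟨i, rfl⟩, hxi⟩ := this
      exact mem_iUnion.2 ⟨⟨⟨b, hb⟩, i⟩, hxi⟩
    · -- diameters
      intro p
      exact le_trans (hdiam p.1.1 p.2) (ENNReal.ofReal_le_ofReal (ht p.1.1).2.le)
    · -- the sum
      rw [ENNReal.tsum_sigma']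
      have hterm : ∀ b : ↥u, (∑' i : Fin (N b.1), EMetric.diam (U b.1 i) ^ s)
          ≤ ENNReal.ofReal ((r b.1) ^ d) * ENNReal.ofReal (δ ^ (s - ρ)) := by
        intro b
        have htb := ht b.1
        have hrb := hr b.1
        have h1 : ∀ i : Fin (N b.1), EMetric.diam (U b.1 i) ^ s
            ≤ ENNReal.ofReal (t b.1 ^ s) := by
          intro i
          calc EMetric.diam (U b.1 i) ^ s ≤ (ENNReal.ofReal (t b.1)) ^ s :=
                ENNReal.rpow_le_rpow (hdiam b.1 i) (by linarith)
            _ = ENNReal.ofReal (t b.1 ^ s) := ENNReal.ofReal_rpow_of_pos htb.1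
        calc (∑' i : Fin (N b.1), EMetric.diam (U b.1 i) ^ s)
            ≤ ∑' _ : Fin (N b.1), ENNReal.ofReal (t b.1 ^ s) := ENNReal.tsum_le_tsum h1
          _ = (N b.1 : ℝ≥0∞) * ENNReal.ofReal (t b.1 ^ s) := by
              rw [tsum_fintype]
              simp [Finset.sum_const, nsmul_eq_mul]
          _ = ENNReal.ofReal ((N b.1 : ℝ) * t b.1 ^ s) := by
              rw [ENNReal.ofReal_mul (by positivity), ENNReal.ofReal_natCast]
          _ ≤ ENNReal.ofReal ((r b.1) ^ d * δ ^ (s - ρ)) := by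
              apply ENNReal.ofReal_le_ofReal
              have e1 : t b.1 ^ s = t b.1 ^ ρ * t b.1 ^ (s - ρ) := by
                rw [← Real.rpow_add htb.1]; ring_nf
              have e2 : t b.1 ^ (s - ρ) ≤ δ ^ (s - ρ) :=
                Real.rpow_le_rpow htb.1.le htb.2.le (by linarith)
              calc (N b.1 : ℝ) * t b.1 ^ s = ((N b.1 : ℝ) * t b.1 ^ ρ) * t b.1 ^ (s - ρ) := by
                    rw [e1]; ring
                _ ≤ (r b.1 ^ d) * δ ^ (s - ρ) := by
                    apply mul_le_mul (hN b.1) e2 (Real.rpow_nonneg htb.1.le _)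
                    exact pow_nonneg hrb.1.le d
          _ = ENNReal.ofReal ((r b.1) ^ d) * ENNReal.ofReal (δ ^ (s - ρ)) :=
              ENNReal.ofReal_mul (pow_nonneg hrb.1.le d)
      calc (∑' (b : ↥u), ∑' i : Fin (N b.1), EMetric.diam (U b.1 i) ^ s)
          ≤ ∑' (b : ↥u), ENNReal.ofReal ((r b.1) ^ d) * ENNReal.ofReal (δ ^ (s - ρ)) :=
            ENNReal.tsum_le_tsum hterm
        _ = (∑' (b : ↥u), ENNReal.ofReal ((r b.1) ^ d)) * ENNReal.ofReal (δ ^ (s - ρ)) :=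
            ENNReal.tsum_mul_right
        _ ≤ C * ENNReal.ofReal (δ ^ (s - ρ)) := by
            refine mul_le_mul_left ?_ _
            -- volume comparison
            have hvol : ∀ b : ↥u, ENNReal.ofReal ((r b.1 / 5) ^ d) * v₁
                = volume (closedBall ((b.1 : F) : EuclideanSpace ℝ (Fin d)) (r b.1 / 5)) := by
              intro b
              rw [MeasureTheory.Measure.addHaar_closedBall volume _
                (by have := (hr b.1).1; positivity), finrank_euclideanSpace_fin]
            have hsum : (∑' (b : ↥u), ENNReal.ofReal ((r b.1 / 5) ^ d)) * v₁ ≤ V := by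
              rw [← ENNReal.tsum_mul_right]
              calc (∑' (b : ↥u), ENNReal.ofReal ((r b.1 / 5) ^ d) * v₁)
                  = ∑' (b : ↥u), volume (closedBall ((b.1 : F) : EuclideanSpace ℝ (Fin d)) (r b.1 / 5)) := by
                    exact tsum_congr hvol
                _ = volume (⋃ b : ↥u, closedBall ((b.1 : F) : EuclideanSpace ℝ (Fin d)) (r b.1 / 5)) := by
                    refine (measure_iUnion ?_ fun b => measurableSet_closedBall).symm
                    exact hdisj.subtype _ _
                _ ≤ V := by
                    refine measure_mono ?_
                    rintro y hy
                    simp only [mem_iUnion] at hy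
                    obtain ⟨b, hb⟩ := hy
                    have hbF : (b.1 : EuclideanSpace ℝ (Fin d)) ∈ ball (0 : EuclideanSpace ℝ (Fin d)) R := b.1.2.2
                    have h1 : dist y (b.1 : EuclideanSpace ℝ (Fin d)) ≤ r b.1 / 5 := mem_closedBall.1 hb
                    have h2 : dist (b.1 : EuclideanSpace ℝ (Fin d)) 0 < R := mem_ball.1 hbF
                    have := (hr b.1)
                    have : dist y (0 : EuclideanSpace ℝ (Fin d)) < R + 1 := by
                      calc dist y (0 : EuclideanSpace ℝ (Fin d)) ≤ dist y (b.1 : EuclideanSpace ℝ (Fin d)) + dist (b.1 : EuclideanSpace ℝ (Fin d)) 0 :=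
                            dist_triangle _ _ _
                        _ < R + 1 := by have := (hr b.1).2; linarith
                    exact mem_ball.2 this
            have hsum' : (∑' (b : ↥u), ENNReal.ofReal ((r b.1 / 5) ^ d)) ≤ V / v₁ :=
              (ENNReal.le_div_iff_mul_le (Or.inl hv₁0) (Or.inl hv₁top)).2 hsum
            calc (∑' (b : ↥u), ENNReal.ofReal ((r b.1) ^ d))
                = ∑' (b : ↥u), ENNReal.ofReal ((5:ℝ)^d) * ENNReal.ofReal ((r b.1 / 5) ^ d) := by
                  refine tsum_congr fun b => ?_
                  rw [← ENNReal.ofReal_mul (by positivity)]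
                  congr 1
                  rw [← mul_pow]
                  congr 1
                  ring
              _ = ENNReal.ofReal ((5:ℝ)^d) * ∑' (b : ↥u), ENNReal.ofReal ((r b.1 / 5) ^ d) :=
                  ENNReal.tsum_mul_left
              _ ≤ C := by rw [hC]; exact mul_le_mul_right hsum' _
  choose ι hι T hcov hdiam hsum using key
  haveI : ∀ n, Countable (ι n) := hι
  have hr0 : Filter.Tendsto (fun n : ℕ => ENNReal.ofReal (((n : ℝ) + 1)⁻¹)) atTop (nhds 0) := by
    have h2 : Filter.Tendsto (fun n : ℕ => ((n : ℝ) + 1)⁻¹) atTop (nhds 0) :=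
      tendsto_one_div_add_atTop_nhds_zero_nat.congr (by simp [one_div])
    have := ENNReal.tendsto_ofReal h2
    simpa using this
  have hmeas := MeasureTheory.Measure.hausdorffMeasure_le_liminf_tsum (l := atTop) s F
    (fun n : ℕ => ENNReal.ofReal (((n : ℝ) + 1)⁻¹)) hr0 T
    (Eventually.of_forall hdiam) (Eventually.of_forall hcov)
  refine le_antisymm ?_ zero_le
  refine le_trans hmeas ?_
  have hlim : Tendsto (fun n : ℕ => C * ENNReal.ofReal ((((n : ℝ) + 1)⁻¹) ^ (s - ρ)))
      atTop (nhds 0) := by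
    have h1 : Tendsto (fun n : ℕ => (((n : ℝ) + 1)⁻¹) ^ (s - ρ)) atTop (nhds 0) := by
      have h2 : Tendsto (fun n : ℕ => ((n : ℝ) + 1)⁻¹) atTop (nhds 0) :=
        tendsto_one_div_add_atTop_nhds_zero_nat.congr (by simp [one_div])
      have h3 := h2.rpow_const (Or.inr (by linarith : (0:ℝ) ≤ s - ρ))
      rwa [Real.zero_rpow (by linarith : s - ρ ≠ 0)] at h3
    have h4 : Tendsto (fun n : ℕ => ENNReal.ofReal ((((n : ℝ) + 1)⁻¹) ^ (s - ρ)))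
        atTop (nhds 0) := by
      have := ENNReal.tendsto_ofReal h1
      simpa using this
    have := ENNReal.Tendsto.const_mul h4 (Or.inr hCtop)
    simpa using this
  calc Filter.liminf (fun n => ∑' i, EMetric.diam (T n i) ^ s) atTop
      ≤ Filter.liminf (fun n : ℕ => C * ENNReal.ofReal ((((n : ℝ) + 1)⁻¹) ^ (s - ρ))) atTop :=
        Filter.liminf_le_liminf (Eventually.of_forall hsum)
    _ = 0 := hlim.liminf_eq

/-- If every point `x` of `E ⊆ ℝ^d` admits, for every `δ > 0`, radii `r ∈ (0,1)`,
`t ∈ (0,δ)` and `N ∈ ℕ` with `N·t^ρ ≤ r^d` such that `B(x,r) ∩ E` can be covered by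
`N` sets of diameter at most `t`, then the Hausdorff dimension of `E` is at most `ρ`. -/
theorem dimH_le_of_covering (d : ℕ) (hd : 1 ≤ d) (E : Set (EuclideanSpace ℝ (Fin d)))
    (ρ : ℝ) (hρ : 0 < ρ)
    (h : ∀ x ∈ E, ∀ δ > (0 : ℝ), ∃ r ∈ Set.Ioo (0 : ℝ) 1, ∃ t ∈ Set.Ioo (0 : ℝ) δ,
      ∃ N : ℕ, (N : ℝ) * t ^ ρ ≤ r ^ d ∧
        ∃ U : Fin N → Set (EuclideanSpace ℝ (Fin d)),
          (Metric.ball x r ∩ E ⊆ ⋃ i, U i) ∧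
          ∀ i, EMetric.diam (U i) ≤ ENNReal.ofReal t) :
    dimH E ≤ ENNReal.ofReal ρ := by
  refine dimH_le fun d' hd' => ?_
  by_contra hlt
  push_neg at hlt
  have hρd' : ρ < (d' : ℝ) := by
    rw [← ENNReal.ofReal_coe_nnreal] at hlt
    exact (ENNReal.ofReal_lt_ofReal_iff_of_nonneg hρ.le).1 hlt
  have hzero : μH[(d' : ℝ)] E = 0 := by
    have hcover : E ⊆ ⋃ n : ℕ, E ∩ ball 0 n := by
      intro x hx
      obtain ⟨n, hn⟩ := exists_nat_gt (dist x 0)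
      exact mem_iUnion.2 ⟨n, hx, mem_ball.2 hn⟩
    exact measure_mono_null hcover
      (measure_iUnion_null fun n => aux_hausdorff_zero d E ρ hρ h (d' : ℝ) hρd' n)
  rw [hzero] at hd'
  exact ENNReal.zero_ne_top hd'
end

section
/- Let d ∈ ℕ, d ≥ 1, let Ω ⊆ ℝ^d be open, and let f : Ω → ℝ^d be differentiable on Ω. Let B ⊆ Ω be a Lebesgue measurable set with 0 < meas(B) < ∞ on which f is injective, and let A ⊆ B be measurable. Suppose there are constants 0 < m ≤ M such that for every x ∈ B the derivative Df(x) satisfies ℓ(Df(x)) ≥ m and ‖Df(x)‖ ≤ M. Then (m/M)^d · meas(A)/meas(B) ≤ meas(f(A))/meas(f(B)) ≤ (M/m)^d · meas(A)/meas(B). -/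
open MeasureTheory Set Metric

lemma det_two_sided_bound {d : ℕ} (hd : 1 ≤ d)
    (L : EuclideanSpace ℝ (Fin d) →L[ℝ] EuclideanSpace ℝ (Fin d))
    {m M : ℝ} (hm : 0 < m) (hM : 0 ≤ M)
    (hlow : ∀ h : EuclideanSpace ℝ (Fin d), ‖h‖ = 1 → m ≤ ‖L h‖)
    (hupp : ‖L‖ ≤ M) :
    m ^ d ≤ |LinearMap.det (L : EuclideanSpace ℝ (Fin d) →ₗ[ℝ] EuclideanSpace ℝ (Fin d))| ∧
    |LinearMap.det (L : EuclideanSpace ℝ (Fin d) →ₗ[ℝ] EuclideanSpace ℝ (Fin d))| ≤ M ^ d := by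
  haveI : Nonempty (Fin d) := Fin.pos_iff_nonempty.mp hd
  set E := EuclideanSpace ℝ (Fin d)
  have hdim : Module.finrank ℝ E = d := finrank_euclideanSpace_fin
  have hL : ∀ x : E, m * ‖x‖ ≤ ‖L x‖ := by
    intro x
    rcases eq_or_ne x 0 with rfl | hx
    · simp
    · have hxn : ‖x‖ ≠ 0 := norm_ne_zero_iff.mpr hx
      have h1 : ‖(‖x‖⁻¹ • x : E)‖ = 1 := by
        simp [norm_smul, abs_of_nonneg (inv_nonneg.mpr (norm_nonneg x)), inv_mul_cancel₀ hxn, abs_norm]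
        rw [abs_of_nonneg (norm_nonneg x), inv_mul_cancel₀ hxn]
      have := hlow _ h1
      rw [L.map_smul, norm_smul] at this
      simp only [norm_inv, norm_norm, Real.norm_eq_abs, abs_norm] at this
      rw [abs_of_nonneg (norm_nonneg x)] at this
      calc m * ‖x‖ ≤ ‖x‖⁻¹ * ‖L x‖ * ‖x‖ := by nlinarith [norm_nonneg x]
        _ = ‖L x‖ := by field_simp
  have hinj : Function.Injective L := by
    intro x y hxy
    have : L (x - y) = 0 := by simp [map_sub, hxy]
    have h2 := hL (x - y)
    rw [this, norm_zero] at h2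
    have : ‖x - y‖ ≤ 0 := by nlinarith [norm_nonneg (x - y)]
    exact sub_eq_zero.mp (norm_le_zero_iff.mp this)
  have hsurj : Function.Surjective L :=
    (LinearMap.injective_iff_surjective (f := (L : E →ₗ[ℝ] E))).mp hinj
  have himg : volume (L '' ball (0 : E) 1)
      = ENNReal.ofReal |LinearMap.det (L : E →ₗ[ℝ] E)| * volume (ball (0 : E) 1) :=
    Measure.addHaar_image_continuousLinearMap _ _ _
  have hball_pos : 0 < volume (ball (0 : E) 1) := measure_ball_pos _ _ one_pos
  have hball_fin : volume (ball (0 : E) 1) ≠ ⊤ := measure_ball_lt_top.ne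
  constructor
  · -- lower bound: ball 0 m ⊆ L '' ball 0 1
    have hsub : ball (0 : E) m ⊆ L '' ball (0 : E) 1 := by
      intro y hy
      obtain ⟨x, rfl⟩ := hsurj y
      refine ⟨x, ?_, rfl⟩
      simp only [mem_ball, dist_zero_right] at hy ⊢
      by_contra hx
      push_neg at hx
      have := hL x
      nlinarith
    have hbm : volume (ball (0 : E) m) = ENNReal.ofReal (m ^ d) * volume (ball (0 : E) 1) := by
      rw [Measure.addHaar_ball volume (0 : E) hm.le, hdim]
    have h1 : ENNReal.ofReal (m ^ d) * volume (ball (0 : E) 1)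
        ≤ ENNReal.ofReal |LinearMap.det (L : E →ₗ[ℝ] E)| * volume (ball (0 : E) 1) := by
      rw [← himg, ← hbm]
      exact measure_mono hsub
    have h2 := ENNReal.mul_le_mul_iff_left hball_pos.ne' hball_fin |>.mp h1
    have := (ENNReal.ofReal_le_ofReal_iff (abs_nonneg _)).mp h2
    exact this
  · have hsub : L '' ball (0 : E) 1 ⊆ closedBall (0 : E) M := by
      rintro _ ⟨x, hx, rfl⟩
      simp only [mem_ball, dist_zero_right] at hx
      simp only [mem_closedBall, dist_zero_right]
      calc ‖L x‖ ≤ ‖L‖ * ‖x‖ := L.le_opNorm x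
        _ ≤ M * 1 := by
            apply mul_le_mul hupp hx.le (norm_nonneg _) hM
        _ = M := mul_one M
    have hbM : volume (closedBall (0 : E) M) = ENNReal.ofReal (M ^ d) * volume (ball (0 : E) 1) := by
      rw [Measure.addHaar_closedBall volume (0 : E) hM, hdim]
    have h1 : ENNReal.ofReal |LinearMap.det (L : E →ₗ[ℝ] E)| * volume (ball (0 : E) 1)
        ≤ ENNReal.ofReal (M ^ d) * volume (ball (0 : E) 1) := by
      rw [← himg, ← hbM]
      exact measure_mono hsub
    have h2 := ENNReal.mul_le_mul_iff_left hball_pos.ne' hball_fin |>.mp h1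
    exact (ENNReal.ofReal_le_ofReal_iff (by positivity)).mp h2


/-- Density distortion under a differentiable injective map with two-sided bounds on
the derivative: if `ℓ(Df(x)) ≥ m` and `‖Df(x)‖ ≤ M` on a measurable set `B ⊆ Ω` of
positive finite measure on which `f` is injective, and `A ⊆ B` is measurable, then
`(m/M)^d · meas(A)/meas(B) ≤ meas(f(A))/meas(f(B)) ≤ (M/m)^d · meas(A)/meas(B)`. -/
theorem density_distortion (d : ℕ) (hd : 1 ≤ d)
    (Ω : Set (EuclideanSpace ℝ (Fin d))) (hΩ : IsOpen Ω)
    (f : EuclideanSpace ℝ (Fin d) → EuclideanSpace ℝ (Fin d))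
    (Df : EuclideanSpace ℝ (Fin d) → EuclideanSpace ℝ (Fin d) →L[ℝ] EuclideanSpace ℝ (Fin d))
    (hf : ∀ x ∈ Ω, HasFDerivAt f (Df x) x)
    (B : Set (EuclideanSpace ℝ (Fin d))) (hBΩ : B ⊆ Ω) (hBmeas : MeasurableSet B)
    (hB0 : 0 < volume B) (hBfin : volume B < ⊤)
    (hinj : Set.InjOn f B)
    (A : Set (EuclideanSpace ℝ (Fin d))) (hAB : A ⊆ B) (hAmeas : MeasurableSet A)
    (m M : ℝ) (hm : 0 < m) (hmM : m ≤ M)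
    (hlow : ∀ x ∈ B, ∀ h : EuclideanSpace ℝ (Fin d), ‖h‖ = 1 → m ≤ ‖Df x h‖)
    (hupp : ∀ x ∈ B, ‖Df x‖ ≤ M) :
    (m / M) ^ d * ((volume A).toReal / (volume B).toReal) ≤
        (volume (f '' A)).toReal / (volume (f '' B)).toReal ∧
      (volume (f '' A)).toReal / (volume (f '' B)).toReal ≤
        (M / m) ^ d * ((volume A).toReal / (volume B).toReal) := by
  
  haveI : Nonempty (Fin d) := Fin.pos_iff_nonempty.mp hd
  have hM : 0 < M := lt_of_lt_of_le hm hmM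
  have hdet := fun x (hx : x ∈ B) =>
    det_two_sided_bound hd (Df x) hm hM.le (hlow x hx) (hupp x hx)
  have key : ∀ s : Set (EuclideanSpace ℝ (Fin d)), MeasurableSet s → s ⊆ B →
      volume (f '' s) = ∫⁻ x in s, ENNReal.ofReal
        |LinearMap.det (Df x : EuclideanSpace ℝ (Fin d) →ₗ[ℝ] EuclideanSpace ℝ (Fin d))| := by
    intro s hs hsB
    exact (lintegral_abs_det_fderiv_eq_addHaar_image volume hs
      (fun x hx => (hf x (hBΩ (hsB hx))).hasFDerivWithinAt) (hinj.mono hsB)).symm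
  have lb : ∀ s : Set (EuclideanSpace ℝ (Fin d)), MeasurableSet s → s ⊆ B →
      ENNReal.ofReal (m ^ d) * volume s ≤ volume (f '' s) := by
    intro s hs hsB
    rw [key s hs hsB]
    calc ENNReal.ofReal (m ^ d) * volume s
        = ∫⁻ _ in s, ENNReal.ofReal (m ^ d) := (setLIntegral_const s _).symm
      _ ≤ _ := setLIntegral_mono' hs fun x hx =>
          ENNReal.ofReal_le_ofReal (hdet x (hsB hx)).1
  have ub : ∀ s : Set (EuclideanSpace ℝ (Fin d)), MeasurableSet s → s ⊆ B →
      volume (f '' s) ≤ ENNReal.ofReal (M ^ d) * volume s := by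
    intro s hs hsB
    rw [key s hs hsB]
    calc (∫⁻ x in s, ENNReal.ofReal
          |LinearMap.det (Df x : EuclideanSpace ℝ (Fin d) →ₗ[ℝ] EuclideanSpace ℝ (Fin d))|)
        ≤ ∫⁻ _ in s, ENNReal.ofReal (M ^ d) := setLIntegral_mono' hs fun x hx =>
          ENNReal.ofReal_le_ofReal (hdet x (hsB hx)).2
      _ = ENNReal.ofReal (M ^ d) * volume s := setLIntegral_const s _
  have hA1 := lb A hAmeas hAB
  have hA2 := ub A hAmeas hAB
  have hB1 := lb B hBmeas le_rfl
  have hB2 := ub B hBmeas le_rfl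
  have hAfin : volume A < ⊤ := lt_of_le_of_lt (measure_mono hAB) hBfin
  have hfBfin : volume (f '' B) < ⊤ :=
    lt_of_le_of_lt hB2 (ENNReal.mul_lt_top ENNReal.ofReal_lt_top hBfin)
  have hfAfin : volume (f '' A) < ⊤ :=
    lt_of_le_of_lt (measure_mono (Set.image_mono hAB)) hfBfin
  have hfB0 : 0 < volume (f '' B) := by
    refine lt_of_lt_of_le ?_ hB1
    exact ENNReal.mul_pos (ENNReal.ofReal_pos.mpr (by positivity)).ne' hB0.ne'
  set a := (volume A).toReal with ha
  set b := (volume B).toReal with hb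
  set a' := (volume (f '' A)).toReal with ha'
  set b' := (volume (f '' B)).toReal with hb'
  have hane : 0 ≤ a := ENNReal.toReal_nonneg
  have hbpos : 0 < b := ENNReal.toReal_pos hB0.ne' hBfin.ne
  have hb'pos : 0 < b' := ENNReal.toReal_pos hfB0.ne' hfBfin.ne
  have ha'ne : 0 ≤ a' := ENNReal.toReal_nonneg
  have conv : ∀ (c : ℝ) (hc : 0 ≤ c) (s : Set (EuclideanSpace ℝ (Fin d))),
      (ENNReal.ofReal c * volume s).toReal = c * (volume s).toReal := by
    intro c hc s
    rw [ENNReal.toReal_mul, ENNReal.toReal_ofReal hc]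
  have rA1 : m ^ d * a ≤ a' := by
    have := ENNReal.toReal_mono hfAfin.ne hA1
    rwa [conv _ (by positivity)] at this
  have rA2 : a' ≤ M ^ d * a := by
    have := ENNReal.toReal_mono (ENNReal.mul_lt_top ENNReal.ofReal_lt_top hAfin).ne hA2
    rwa [conv _ (by positivity)] at this
  have rB1 : m ^ d * b ≤ b' := by
    have := ENNReal.toReal_mono hfBfin.ne hB1
    rwa [conv _ (by positivity)] at this
  have rB2 : b' ≤ M ^ d * b := by
    have := ENNReal.toReal_mono (ENNReal.mul_lt_top ENNReal.ofReal_lt_top hBfin).ne hB2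
    rwa [conv _ (by positivity)] at this
  constructor
  · have heq : (m / M) ^ d * (a / b) = (m ^ d * a) / (M ^ d * b) := by
      rw [div_pow]
      field_simp
    rw [heq, div_le_div_iff₀ (by positivity) hb'pos]
    have h1 : m ^ d * a * b' ≤ a' * b' :=
      mul_le_mul_of_nonneg_right rA1 hb'pos.le
    have h2 : a' * b' ≤ a' * (M ^ d * b) :=
      mul_le_mul_of_nonneg_left rB2 ha'ne
    linarith
  · have heq : (M / m) ^ d * (a / b) = (M ^ d * a) / (m ^ d * b) := by
      rw [div_pow]
      field_simp
    rw [heq, div_le_div_iff₀ hb'pos (by positivity)]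
    have h1 : a' * (m ^ d * b) ≤ (M ^ d * a) * (m ^ d * b) :=
      mul_le_mul_of_nonneg_right rA2 (by positivity)
    have h2 : (M ^ d * a) * (m ^ d * b) ≤ (M ^ d * a) * b' :=
      mul_le_mul_of_nonneg_left rB1 (by positivity)
    linarith
end

section
/- Let (a_j)_{j≥1} be a sequence of real numbers with a_j > 1 for all j, and suppose that for every C > 1 there exists M ∈ ℕ such that a_j ≥ a_{j−1}^C for all j > M. Then for every δ > 0 there exists N ∈ ℕ such that ∏_{j=1}^{m−1} a_j ≤ a_m^δ for all m ≥ N. -/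
open Finset

private lemma aux_pow (a : ℕ → ℝ) (C : ℝ) (hC : 1 ≤ C) (M : ℕ)
    (ha : ∀ j, 1 ≤ j → 1 < a j) (hMj : 1 ≤ M)
    (h : ∀ j, M < j → a (j - 1) ^ C ≤ a j) :
    ∀ k m, M ≤ m → a m ^ ((C : ℝ) ^ k) ≤ a (m + k) := by
  intro k
  induction k with
  | zero => intro m hm; simp
  | succ k ih =>
    intro m hm
    have h1 : (1 : ℕ) ≤ m := le_trans hMj hm
    have h0 : (0 : ℝ) ≤ a m := le_of_lt (lt_trans one_pos (ha m h1))
    have : a m ^ ((C : ℝ) ^ (k + 1)) = (a m ^ ((C : ℝ) ^ k)) ^ C := by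
      rw [← Real.rpow_mul h0, pow_succ]
    rw [this]
    have h2 : a m ^ ((C : ℝ) ^ k) ≤ a (m + k) := ih m hm
    have h3 : (a m ^ ((C : ℝ) ^ k)) ^ C ≤ a (m + k) ^ C :=
      Real.rpow_le_rpow (Real.rpow_nonneg h0 _) h2 (le_trans zero_le_one hC)
    refine h3.trans ?_
    have h4 : M < m + k + 1 := by omega
    have := h (m + k + 1) h4
    simpa [← add_assoc] using this

/-- If `a_j > 1` for `j ≥ 1` and for every `C > 1` one has `a_j ≥ a_{j-1}^C` for all
sufficiently large `j`, then for every `δ > 0` the product `∏_{j=1}^{m-1} a_j` is at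
most `a_m^δ` for all sufficiently large `m`. -/
theorem prod_le_rpow_of_fast_growth (a : ℕ → ℝ) (ha : ∀ j, 1 ≤ j → 1 < a j)
    (hgrow : ∀ C : ℝ, 1 < C → ∃ M : ℕ, 1 ≤ M ∧ ∀ j, M < j → a (j - 1) ^ C ≤ a j) :
    ∀ δ : ℝ, 0 < δ → ∃ N : ℕ, ∀ m, N ≤ m →
      (∏ j ∈ Finset.Icc 1 (m - 1), a j) ≤ a m ^ δ := by
  intro δ hδ
  set C : ℝ := max 2 (1 + 2 / δ) with hCdef
  have hC2 : (2 : ℝ) ≤ C := le_max_left _ _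
  have hC1 : (1 : ℝ) < C := lt_of_lt_of_le one_lt_two hC2
  have hC0 : (0 : ℝ) < C := lt_trans one_pos hC1
  obtain ⟨M, hM1, hM⟩ := hgrow C hC1
  -- key inequality: for M ≤ j ≤ m, a j ≤ a m ^ (C⁻¹ ^ (m - j))
  have key : ∀ j m, M ≤ j → j ≤ m → a j ≤ a m ^ ((C⁻¹ : ℝ) ^ (m - j)) := by
    intro j m hj hjm
    have h1 : (1 : ℕ) ≤ j := le_trans hM1 hj
    have h0 : (0 : ℝ) ≤ a j := le_of_lt (lt_trans one_pos (ha j h1))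
    have hp := aux_pow a C hC1.le M ha hM1 hM (m - j) j hj
    rw [show j + (m - j) = m by omega] at hp
    have hne : (C : ℝ) ^ (m - j) ≠ 0 := pow_ne_zero _ (ne_of_gt hC0)
    have := Real.rpow_le_rpow (Real.rpow_nonneg h0 _) hp
      (le_of_lt (inv_pos.mpr (pow_pos hC0 (m - j))))
    rw [Real.rpow_rpow_inv h0 hne] at this
    rw [inv_pow]
    exact this
  -- the constant prefix product
  set P : ℝ := ∏ j ∈ Finset.Icc 1 M, a j with hPdef
  have hP1 : 1 ≤ P := by
    rw [hPdef]
    calc (1 : ℝ) = ∏ _j ∈ Finset.Icc 1 M, (1 : ℝ) := by simp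
      _ ≤ ∏ j ∈ Finset.Icc 1 M, a j :=
        Finset.prod_le_prod (fun i _ => zero_le_one)
          (fun i hi => le_of_lt (ha i (Finset.mem_Icc.mp hi).1))
  have hP0 : (0 : ℝ) < P := lt_of_lt_of_le one_pos hP1
  -- choose n₀ with P ^ (2/δ) < a (M+1) ^ n₀
  have haM1 : 1 < a (M + 1) := ha (M + 1) (by omega)
  obtain ⟨n₀, hn₀⟩ := pow_unbounded_of_one_lt (P ^ (2 / δ)) haM1
  refine ⟨M + 2 + n₀, fun m hm => ?_⟩
  have hm2 : M + 2 ≤ m := by omega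
  have haM0 : (0 : ℝ) ≤ a (M + 1) := by linarith
  have ham1 : 1 < a m := ha m (by omega)
  have ham0 : (0 : ℝ) ≤ a m := by linarith
  -- a m is large: P ≤ a m ^ (δ / 2)
  have hbig : P ≤ a m ^ (δ / 2) := by
    have hk : M + 1 ≤ m := by omega
    have hp := aux_pow a C hC1.le M ha hM1 hM (m - (M + 1)) (M + 1) (by omega)
    rw [show M + 1 + (m - (M + 1)) = m by omega] at hp
    -- C ^ (m - M - 1) ≥ n₀, so a (M+1) ^ n₀ ≤ a m
    have hCk : (n₀ : ℝ) ≤ (C : ℝ) ^ (m - (M + 1)) := by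
      calc (n₀ : ℝ) ≤ ((2 : ℝ) ^ (m - (M + 1))) := by
            have h2 : n₀ ≤ 2 ^ (m - (M + 1)) := by
              have h1 : m - (M + 1) < 2 ^ (m - (M + 1)) := Nat.lt_two_pow_self
              omega
            exact_mod_cast h2
          _ ≤ (C : ℝ) ^ (m - (M + 1)) := pow_le_pow_left₀ (by norm_num) hC2 _
    have h1 : a (M + 1) ^ (n₀ : ℝ) ≤ a (M + 1) ^ ((C : ℝ) ^ (m - (M + 1))) :=
      Real.rpow_le_rpow_of_exponent_le haM1.le hCk
    have h2 : P ^ (2 / δ) ≤ a m := by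
      calc P ^ (2 / δ) ≤ a (M + 1) ^ n₀ := hn₀.le
        _ = a (M + 1) ^ (n₀ : ℝ) := (Real.rpow_natCast _ _).symm
        _ ≤ a (M + 1) ^ ((C : ℝ) ^ (m - (M + 1))) := h1
        _ ≤ a m := hp
    have h3 := Real.rpow_le_rpow (Real.rpow_nonneg hP0.le _) h2 (by positivity : (0:ℝ) ≤ δ / 2)
    rwa [← Real.rpow_mul hP0.le, div_mul_div_comm,
      show (2 : ℝ) * δ / (δ * 2) = 1 by field_simp, Real.rpow_one] at h3
  -- the tail product bound
  have htail : (∏ j ∈ Finset.Ioc M (m - 1), a j) ≤ a m ^ (δ / 2) := by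
    have step : ∀ j ∈ Finset.Ioc M (m - 1), a j ≤ a m ^ ((C⁻¹ : ℝ) ^ (m - j)) := by
      intro j hj
      obtain ⟨hj1, hj2⟩ := Finset.mem_Ioc.mp hj
      exact key j m hj1.le (by omega)
    have hprod : (∏ j ∈ Finset.Ioc M (m - 1), a j)
        ≤ ∏ j ∈ Finset.Ioc M (m - 1), a m ^ ((C⁻¹ : ℝ) ^ (m - j)) := by
      refine Finset.prod_le_prod (fun j hj => ?_) step
      have := ha j (by have := (Finset.mem_Ioc.mp hj).1; omega); linarith
    rw [← Real.rpow_sum_of_pos (by linarith : (0:ℝ) < a m)] at hprod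
    refine hprod.trans (Real.rpow_le_rpow_of_exponent_le ham1.le ?_)
    -- bound the geometric sum
    have hreindex : (∑ j ∈ Finset.Ioc M (m - 1), (C⁻¹ : ℝ) ^ (m - j))
        = ∑ k ∈ Finset.Icc 1 (m - 1 - M), (C⁻¹ : ℝ) ^ k := by
      refine Finset.sum_nbij' (fun j => m - j) (fun k => m - k) ?_ ?_ ?_ ?_ ?_
      · intro j hj; simp only [Finset.mem_Ioc, Finset.mem_Icc] at *; omega
      · intro k hk; simp only [Finset.mem_Ioc, Finset.mem_Icc] at *; omega
      · intro j hj; simp only [Finset.mem_Ioc] at hj; omega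
      · intro k hk; simp only [Finset.mem_Icc] at hk; omega
      · intro j hj; rfl
    rw [hreindex]
    have hr0 : (0 : ℝ) ≤ C⁻¹ := by positivity
    have hr1 : (C⁻¹ : ℝ) < 1 := inv_lt_one_of_one_lt₀ hC1
    have hsum : (∑ k ∈ Finset.Icc 1 (m - 1 - M), (C⁻¹ : ℝ) ^ k)
        ≤ (1 - C⁻¹)⁻¹ - 1 := by
      have h1 : (∑ k ∈ Finset.range (m - 1 - M + 1), (C⁻¹ : ℝ) ^ k) ≤ (1 - C⁻¹)⁻¹ :=
        Summable.sum_le_tsum _ (fun i _ => by positivity)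
          (summable_geometric_of_lt_one hr0 hr1) |>.trans_eq
          (tsum_geometric_of_lt_one hr0 hr1)
      have h2 : (∑ k ∈ Finset.range (m - 1 - M + 1), (C⁻¹ : ℝ) ^ k)
          = 1 + ∑ k ∈ Finset.Icc 1 (m - 1 - M), (C⁻¹ : ℝ) ^ k := by
        have hins : Finset.range (m - 1 - M + 1) = insert 0 (Finset.Icc 1 (m - 1 - M)) := by
          ext x; simp only [Finset.mem_range, Finset.mem_insert, Finset.mem_Icc]; omega
        rw [hins, Finset.sum_insert (by simp), pow_zero]
      linarith
    refine hsum.trans ?_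
    have hC1' : (0 : ℝ) < C - 1 := by linarith
    have heq : (1 - C⁻¹)⁻¹ - 1 = (C - 1)⁻¹ := by
      field_simp
      ring
    rw [heq]
    have hmax : 1 + 2 / δ ≤ C := le_max_right _ _
    have h2δ : (0 : ℝ) < 2 / δ := by positivity
    have hinv : (C - 1)⁻¹ ≤ (2 / δ)⁻¹ :=
      inv_anti₀ h2δ (by linarith)
    have : (2 / δ)⁻¹ = δ / 2 := by rw [inv_div]
    linarith
  -- combine
  have hsplit : (∏ j ∈ Finset.Icc 1 (m - 1), a j)
      = P * ∏ j ∈ Finset.Ioc M (m - 1), a j := by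
    rw [hPdef, show Finset.Icc 1 (m - 1) = Finset.Ioc 0 (m - 1) by rfl,
      show Finset.Icc 1 M = Finset.Ioc 0 M by rfl,
      Finset.prod_Ioc_consecutive _ (Nat.zero_le M) (by omega : M ≤ m - 1)]
  rw [hsplit]
  have htailpos : (0 : ℝ) ≤ ∏ j ∈ Finset.Ioc M (m - 1), a j := by
    refine Finset.prod_nonneg fun j hj => ?_
    have := ha j (by have := (Finset.mem_Ioc.mp hj).1; omega); linarith
  calc P * ∏ j ∈ Finset.Ioc M (m - 1), a j
      ≤ (a m ^ (δ / 2)) * (a m ^ (δ / 2)) :=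
        mul_le_mul hbig htail htailpos (by positivity)
    _ = a m ^ δ := by rw [← Real.rpow_add (by linarith : (0:ℝ) < a m)]; ring_nf
end
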